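/- arXiv:1207.4533 — 5 statements merged into one kernel-verified Lean document; each statement's English description precedes it below -/
import Mathlib

section
/- In G, the element (a^s u^i v)^2 equals a^(2^(l-1)) if i is even and s is odd, and equals 1 if i is odd or s is even. -/
namespace ZkDl

def n₁ (l : ℕ) : ℕ := 2 ^ (l - 1) + 1
def n₂ (l : ℕ) : ℕ := 2 ^ (l - 1) - 1

/-- The relations of the presentation
`⟨a, u, v | a^(2^l) = u^k = v^2 = 1, u a u⁻¹ = a^(n₁), v a v = a^(n₂), v u v = u⁻¹⟩`,
with generators `a = 0`, `u = 1`, `v = 2` in `Fin 3`. -/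
def rels (l k : ℕ) : Set (FreeGroup (Fin 3)) :=
  { FreeGroup.of 0 ^ 2 ^ l,
    FreeGroup.of 1 ^ k,
    FreeGroup.of 2 ^ 2,
    FreeGroup.of 1 * FreeGroup.of 0 * (FreeGroup.of 1)⁻¹ * (FreeGroup.of 0 ^ n₁ l)⁻¹,
    FreeGroup.of 2 * FreeGroup.of 0 * FreeGroup.of 2 * (FreeGroup.of 0 ^ n₂ l)⁻¹,
    FreeGroup.of 2 * FreeGroup.of 1 * FreeGroup.of 2 * FreeGroup.of 1 }

/-- The group `Z_{2^l} ⋊ D_k` given by the presentation above. -/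
abbrev G (l k : ℕ) : Type := PresentedGroup (rels l k)

def a (l k : ℕ) : G l k := PresentedGroup.of 0
def u (l k : ℕ) : G l k := PresentedGroup.of 1
def v (l k : ℕ) : G l k := PresentedGroup.of 2

lemma mk_rel_one {l k : ℕ} {r : FreeGroup (Fin 3)} (h : r ∈ rels l k) :
    PresentedGroup.mk (rels l k) r = 1 :=
  (QuotientGroup.eq_one_iff r).mpr (Subgroup.subset_normalClosure h)

lemma rel_a (l k : ℕ) : a l k ^ (2 ^ l) = 1 := by
  have := mk_rel_one (l := l) (k := k) (r := FreeGroup.of 0 ^ 2 ^ l) (by simp [rels])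
  simpa [a, PresentedGroup.of, map_pow] using this

lemma rel_v (l k : ℕ) : v l k * v l k = 1 := by
  have := mk_rel_one (l := l) (k := k) (r := FreeGroup.of 2 ^ 2) (by simp [rels])
  simpa [v, PresentedGroup.of, map_pow, pow_two] using this

lemma rel_ua (l k : ℕ) : u l k * a l k * (u l k)⁻¹ = a l k ^ n₁ l := by
  have := mk_rel_one (l := l) (k := k)
    (r := FreeGroup.of 1 * FreeGroup.of 0 * (FreeGroup.of 1)⁻¹ * (FreeGroup.of 0 ^ n₁ l)⁻¹)
    (by simp [rels])
  simp only [map_mul, map_inv, map_pow] at this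
  exact mul_inv_eq_one.mp this

lemma rel_va (l k : ℕ) : v l k * a l k * v l k = a l k ^ n₂ l := by
  have := mk_rel_one (l := l) (k := k)
    (r := FreeGroup.of 2 * FreeGroup.of 0 * FreeGroup.of 2 * (FreeGroup.of 0 ^ n₂ l)⁻¹)
    (by simp [rels])
  simp only [map_mul, map_inv, map_pow] at this
  exact mul_inv_eq_one.mp this

lemma rel_vu (l k : ℕ) : v l k * u l k * v l k = (u l k)⁻¹ := by
  have := mk_rel_one (l := l) (k := k)
    (r := FreeGroup.of 2 * FreeGroup.of 1 * FreeGroup.of 2 * FreeGroup.of 1)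
    (by simp [rels])
  simp only [map_mul] at this
  exact eq_inv_of_mul_eq_one_left this

variable {l k : ℕ}

lemma v_inv (l k : ℕ) : (v l k)⁻¹ = v l k :=
  inv_eq_of_mul_eq_one_right (rel_v l k)

lemma a_zpow_mul (t : ℤ) : a l k ^ ((2:ℤ) ^ l * t) = 1 := by
  have h : a l k ^ ((2:ℤ) ^ l) = 1 := by
    rw [show ((2:ℤ) ^ l) = ((2 ^ l : ℕ) : ℤ) by push_cast; ring, zpow_natCast, rel_a]
  rw [zpow_mul, h, one_zpow]

lemma a_congr {m m' : ℤ} (h : (2:ℤ) ^ l ∣ m - m') : a l k ^ m = a l k ^ m' := by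
  obtain ⟨t, ht⟩ := h
  have hm : m = m' + 2 ^ l * t := by linarith
  rw [hm, zpow_add, a_zpow_mul, mul_one]

lemma conj_u (m : ℤ) : u l k * a l k ^ m * (u l k)⁻¹ = a l k ^ ((n₁ l : ℤ) * m) := by
  calc u l k * a l k ^ m * (u l k)⁻¹ = (u l k * a l k * (u l k)⁻¹) ^ m := conj_zpow.symm
    _ = (a l k ^ n₁ l) ^ m := by rw [rel_ua]
    _ = a l k ^ ((n₁ l : ℤ) * m) := by rw [← zpow_natCast (a l k) (n₁ l), ← zpow_mul]

lemma conj_v_a (m : ℤ) : v l k * a l k ^ m * v l k = a l k ^ ((n₂ l : ℤ) * m) := by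
  calc v l k * a l k ^ m * v l k = v l k * a l k ^ m * (v l k)⁻¹ := by rw [v_inv]
    _ = (v l k * a l k * (v l k)⁻¹) ^ m := conj_zpow.symm
    _ = (a l k ^ n₂ l) ^ m := by rw [v_inv, rel_va]
    _ = a l k ^ ((n₂ l : ℤ) * m) := by rw [← zpow_natCast (a l k) (n₂ l), ← zpow_mul]

lemma conj_v_u (i : ℤ) : v l k * u l k ^ i * v l k = u l k ^ (-i) := by
  calc v l k * u l k ^ i * v l k = v l k * u l k ^ i * (v l k)⁻¹ := by rw [v_inv]
    _ = (v l k * u l k * (v l k)⁻¹) ^ i := conj_zpow.symm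
    _ = ((u l k)⁻¹) ^ i := by rw [v_inv, rel_vu]
    _ = u l k ^ (-i) := by rw [inv_zpow, ← zpow_neg]

lemma n1_cast (hl : 3 ≤ l) : (n₁ l : ℤ) = 2 ^ (l - 1) + 1 := by
  simp [n₁]

lemma n2_cast (hl : 3 ≤ l) : (n₂ l : ℤ) = 2 ^ (l - 1) - 1 := by
  have h1 : 1 ≤ 2 ^ (l - 1) := Nat.one_le_two_pow
  simp [n₂, Nat.cast_sub h1]

lemma pow_l_eq (hl : 3 ≤ l) : (2:ℤ) ^ l = 2 ^ (l - 1) * 2 := by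
  rw [← pow_succ]; congr 1; omega

lemma pow_sq_eq (hl : 3 ≤ l) : (2:ℤ) ^ (l - 1) * 2 ^ (l - 1) = 2 ^ l * 2 ^ (l - 2) := by
  rw [← pow_add, ← pow_add]; congr 1; omega

lemma comm_uu (hl : 3 ≤ l) (m : ℤ) : Commute (u l k * u l k) (a l k ^ m) := by
  have h : u l k * u l k * a l k ^ m * (u l k * u l k)⁻¹ = a l k ^ m := by
    calc u l k * u l k * a l k ^ m * (u l k * u l k)⁻¹
        = u l k * (u l k * a l k ^ m * (u l k)⁻¹) * (u l k)⁻¹ := by group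
      _ = u l k * a l k ^ ((n₁ l : ℤ) * m) * (u l k)⁻¹ := by rw [conj_u]
      _ = a l k ^ ((n₁ l : ℤ) * ((n₁ l : ℤ) * m)) := conj_u _
      _ = a l k ^ m := by
          refine a_congr ⟨(2 ^ (l - 2) + 1) * m, ?_⟩
          rw [n1_cast hl]
          linear_combination m * (pow_sq_eq hl) - m * (pow_l_eq hl)
  show u l k * u l k * a l k ^ m = a l k ^ m * (u l k * u l k)
  calc u l k * u l k * a l k ^ m
      = u l k * u l k * a l k ^ m * (u l k * u l k)⁻¹ * (u l k * u l k) := by group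
    _ = a l k ^ m * (u l k * u l k) := by rw [h]

lemma conj_u_even (hl : 3 ≤ l) (j m : ℤ) :
    u l k ^ (2 * j) * a l k ^ m * (u l k ^ (2 * j))⁻¹ = a l k ^ m := by
  have h2 : u l k ^ (2 * j) = (u l k * u l k) ^ j := by
    rw [zpow_mul, show (u l k) ^ (2:ℤ) = u l k * u l k by
      rw [show (2:ℤ) = 1 + 1 from rfl, zpow_add, zpow_one]]
  rw [h2, ((comm_uu hl m).zpow_left j).eq, mul_inv_cancel_right]

lemma conj_u_odd (hl : 3 ≤ l) (j m : ℤ) :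
    u l k ^ (2 * j + 1) * a l k ^ m * (u l k ^ (2 * j + 1))⁻¹ =
      a l k ^ ((n₁ l : ℤ) * m) := by
  have h2 : u l k ^ (2 * j + 1) = (u l k * u l k) ^ j * u l k := by
    rw [zpow_add, zpow_one, zpow_mul, show (u l k) ^ (2:ℤ) = u l k * u l k by
      rw [show (2:ℤ) = 1 + 1 from rfl, zpow_add, zpow_one]]
  have hc := ((comm_uu (l := l) (k := k) hl ((n₁ l : ℤ) * m)).zpow_left j).eq
  calc u l k ^ (2 * j + 1) * a l k ^ m * (u l k ^ (2 * j + 1))⁻¹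
      = (u l k * u l k) ^ j * (u l k * a l k ^ m * (u l k)⁻¹) * ((u l k * u l k) ^ j)⁻¹ := by
        rw [h2]; group
    _ = (u l k * u l k) ^ j * a l k ^ ((n₁ l : ℤ) * m) * ((u l k * u l k) ^ j)⁻¹ := by
        rw [conj_u]
    _ = a l k ^ ((n₁ l : ℤ) * m) := by rw [hc, mul_inv_cancel_right]

lemma sq_eq (hl : 3 ≤ l) (s i : ℤ) :
    (a l k ^ s * u l k ^ i * v l k) ^ 2 =
      a l k ^ s * (u l k ^ i * a l k ^ ((n₂ l : ℤ) * s) * (u l k ^ i)⁻¹) := by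
  have e1 : v l k * (a l k ^ s * u l k ^ i * v l k) =
      a l k ^ ((n₂ l : ℤ) * s) * u l k ^ (-i) := by
    calc v l k * (a l k ^ s * u l k ^ i * v l k)
        = v l k * a l k ^ s * (v l k * v l k) * u l k ^ i * v l k := by
          rw [rel_v]; group
      _ = (v l k * a l k ^ s * v l k) * (v l k * u l k ^ i * v l k) := by group
      _ = a l k ^ ((n₂ l : ℤ) * s) * u l k ^ (-i) := by rw [conj_v_a, conj_v_u]
  calc (a l k ^ s * u l k ^ i * v l k) ^ 2
      = a l k ^ s * u l k ^ i * (v l k * (a l k ^ s * u l k ^ i * v l k)) := by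
        rw [pow_two]; group
    _ = a l k ^ s * u l k ^ i * (a l k ^ ((n₂ l : ℤ) * s) * u l k ^ (-i)) := by rw [e1]
    _ = a l k ^ s * (u l k ^ i * a l k ^ ((n₂ l : ℤ) * s) * (u l k ^ i)⁻¹) := by
        rw [← zpow_neg]; group

end ZkDl

open ZkDl

theorem sq_of_asuiv (l k : ℕ) (hl : 3 ≤ l) (hk : 4 ∣ k) (s i : ℤ) :
    (Even i ∧ Odd s →
      (a l k ^ s * u l k ^ i * v l k) ^ 2 = a l k ^ (2 ^ (l - 1)) ) ∧
    (Odd i ∨ Even s →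
      (a l k ^ s * u l k ^ i * v l k) ^ 2 = 1) := by
  have hn1 := n1_cast (l := l) hl
  have hn2 := n2_cast (l := l) hl
  have h2l := pow_l_eq (l := l) hl
  have hsq := pow_sq_eq (l := l) hl
  constructor
  · rintro ⟨⟨j, hj⟩, ⟨t, ht⟩⟩
    have hi : i = 2 * j := by omega
    rw [sq_eq hl, hi, conj_u_even hl, ← zpow_add,
      show a l k ^ (2 ^ (l - 1)) = a l k ^ ((2 ^ (l - 1) : ℕ) : ℤ) from (zpow_natCast _ _).symm]
    refine a_congr ⟨t, ?_⟩
    push_cast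
    rw [hn2, ht]
    linear_combination (-t) * h2l
  · rintro (⟨j, hj⟩ | ⟨t, ht⟩)
    · rw [sq_eq hl, hj, show 2 * j + 1 = 2 * j + 1 from rfl, conj_u_odd hl, ← zpow_add,
        show (1 : G l k) = a l k ^ (0 : ℤ) from (zpow_zero _).symm]
      refine a_congr ⟨2 ^ (l - 2) * s, ?_⟩
      rw [hn1, hn2]
      linear_combination s * hsq
    · rcases Int.even_or_odd i with ⟨j, hj⟩ | ⟨j, hj⟩
      · have hi : i = 2 * j := by omega
        rw [sq_eq hl, hi, conj_u_even hl, ← zpow_add,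
          show (1 : G l k) = a l k ^ (0 : ℤ) from (zpow_zero _).symm]
        refine a_congr ⟨t, ?_⟩
        rw [hn2]
        have hs : s = 2 * t := by omega
        rw [hs]
        linear_combination (-t) * h2l
      · rw [sq_eq hl, hj, conj_u_odd hl, ← zpow_add,
          show (1 : G l k) = a l k ^ (0 : ℤ) from (zpow_zero _).symm]
        refine a_congr ⟨2 ^ (l - 2) * s, ?_⟩
        rw [hn1, hn2]
        linear_combination s * hsq
end

section
/- For any integers s and even i = 2i', the conjugacy class of a^s u^(2i') in G is {a^s u^(2i'), a^(n_1 s) u^(2i'), a^(n_2 s) u^(-2i'), a^(-s) u^(-2i')}. -/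
open ZkDl

section Aux

variable {l k : ℕ}

lemma rel_one {r : FreeGroup (Fin 3)} (hr : r ∈ rels l k) :
    PresentedGroup.mk (rels l k) r = 1 :=
  (QuotientGroup.eq_one_iff r).mpr (Subgroup.subset_normalClosure hr)

lemma aOrd (l k : ℕ) : a l k ^ (2 ^ l) = 1 := by
  have h := rel_one (l := l) (k := k) (Set.mem_insert _ _)
  rw [map_pow] at h
  exact h

lemma vSq (l k : ℕ) : v l k ^ 2 = 1 := by
  have h := rel_one (l := l) (k := k)
    (Set.mem_insert_of_mem _ (Set.mem_insert_of_mem _ (Set.mem_insert _ _)))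
  rw [map_pow] at h
  exact h

lemma vInv (l k : ℕ) : (v l k)⁻¹ = v l k := by
  have h := vSq l k
  rw [sq] at h
  exact inv_eq_of_mul_eq_one_right h

lemma uaRel (l k : ℕ) : u l k * a l k * (u l k)⁻¹ = a l k ^ n₁ l := by
  have h := rel_one (l := l) (k := k)
    (Set.mem_insert_of_mem _ (Set.mem_insert_of_mem _ (Set.mem_insert_of_mem _
      (Set.mem_insert _ _))))
  simp only [map_mul, map_inv, map_pow] at h
  exact mul_inv_eq_one.mp h

lemma vaRel (l k : ℕ) : v l k * a l k * v l k = a l k ^ n₂ l := by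
  have h := rel_one (l := l) (k := k)
    (Set.mem_insert_of_mem _ (Set.mem_insert_of_mem _ (Set.mem_insert_of_mem _
      (Set.mem_insert_of_mem _ (Set.mem_insert _ _)))))
  simp only [map_mul, map_inv, map_pow] at h
  exact mul_inv_eq_one.mp h

lemma vuRel (l k : ℕ) : v l k * u l k * v l k = (u l k)⁻¹ := by
  have h := rel_one (l := l) (k := k)
    (Set.mem_insert_of_mem _ (Set.mem_insert_of_mem _ (Set.mem_insert_of_mem _
      (Set.mem_insert_of_mem _ (Set.mem_insert_of_mem _ rfl)))))
  simp only [map_mul] at h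
  exact mul_eq_one_iff_eq_inv.mp h

end Aux

theorem conj_class_even (l k : ℕ) (hl : 3 ≤ l) (hk : 4 ∣ k) (s i : ℤ) :
    {y : G l k | IsConj (a l k ^ s * u l k ^ (2 * i)) y} =
      {a l k ^ s * u l k ^ (2 * i),
       a l k ^ ((n₁ l : ℤ) * s) * u l k ^ (2 * i),
       a l k ^ ((n₂ l : ℤ) * s) * u l k ^ (-(2 * i)),
       a l k ^ (-s) * u l k ^ (-(2 * i))} := by
  obtain ⟨j, rfl⟩ : ∃ j, l = j + 3 := ⟨l - 3, by omega⟩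
  set A := a (j + 3) k with hA
  set U := u (j + 3) k with hU
  set V := v (j + 3) k with hV
  set m₁ : ℤ := (n₁ (j + 3) : ℤ) with hm₁def
  set m₂ : ℤ := (n₂ (j + 3) : ℤ) with hm₂def
  have hm₁ : m₁ = 4 * 2 ^ j + 1 := by
    rw [hm₁def]; simp only [n₁]; push_cast; ring
  have hm₂ : m₂ = 4 * 2 ^ j - 1 := by
    rw [hm₂def]; simp only [n₂]
    rw [Nat.cast_sub (Nat.one_le_two_pow)]
    push_cast; ring
  -- the congruence lemma for powers of A
  have hAord : A ^ ((2 : ℤ) ^ (j + 3)) = 1 := by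
    rw [show ((2 : ℤ) ^ (j + 3)) = ((2 ^ (j + 3) : ℕ) : ℤ) by push_cast; ring,
      zpow_natCast, aOrd]
  have hacongr : ∀ x y : ℤ, ((2 : ℤ) ^ (j + 3)) ∣ x - y → A ^ x = A ^ y := by
    rintro x y ⟨t, ht⟩
    have hx : x = y + 2 ^ (j + 3) * t := by linarith
    rw [hx, zpow_add, zpow_mul, hAord, one_zpow, mul_one]
  -- conjugation formulas for generators on powers of A and U
  have hUconj : ∀ t : ℤ, U * A ^ t * U⁻¹ = A ^ (m₁ * t) := by
    intro t
    calc U * A ^ t * U⁻¹ = (U * A * U⁻¹) ^ t := conj_zpow.symm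
      _ = (A ^ n₁ (j + 3)) ^ t := by rw [uaRel]
      _ = A ^ (m₁ * t) := by rw [← zpow_natCast A (n₁ (j + 3)), ← zpow_mul, hm₁def]
  have hVconj : ∀ t : ℤ, V * A ^ t * V⁻¹ = A ^ (m₂ * t) := by
    intro t
    have hva : V * A * V⁻¹ = A ^ n₂ (j + 3) := by rw [vInv]; exact vaRel (j + 3) k
    calc V * A ^ t * V⁻¹ = (V * A * V⁻¹) ^ t := conj_zpow.symm
      _ = (A ^ n₂ (j + 3)) ^ t := by rw [hva]
      _ = A ^ (m₂ * t) := by rw [← zpow_natCast A (n₂ (j + 3)), ← zpow_mul, hm₂def]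
  have hVUconj : ∀ w : ℤ, V * U ^ w * V⁻¹ = U ^ (-w) := by
    intro w
    have hvu : V * U * V⁻¹ = U⁻¹ := by rw [vInv]; exact vuRel (j + 3) k
    calc V * U ^ w * V⁻¹ = (V * U * V⁻¹) ^ w := conj_zpow.symm
      _ = (U⁻¹) ^ w := by rw [hvu]
      _ = U ^ (-w) := by rw [inv_zpow, zpow_neg]
  -- A commutes with even powers of U
  have hU2A : ∀ t : ℤ, U ^ (2 : ℤ) * A ^ t * (U ^ (2 : ℤ))⁻¹ = A ^ t := by
    intro t
    have h2 : U ^ (2 : ℤ) = U * U := zpow_two U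
    rw [h2]
    calc U * U * A ^ t * (U * U)⁻¹ = U * (U * A ^ t * U⁻¹) * U⁻¹ := by group
      _ = U * A ^ (m₁ * t) * U⁻¹ := by rw [hUconj]
      _ = A ^ (m₁ * (m₁ * t)) := hUconj _
      _ = A ^ t := hacongr _ _ ⟨(2 * 2 ^ j + 1) * t, by rw [hm₁]; ring⟩
  have hAcommU : ∀ t w : ℤ, U ^ (2 * w) * A ^ t = A ^ t * U ^ (2 * w) := by
    intro t w
    have h1 : Commute (U ^ (2 : ℤ)) (A ^ t) := by
      have h := hU2A t
      rw [mul_inv_eq_iff_eq_mul] at h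
      exact h
    rw [zpow_mul]
    exact h1.zpow_left w
  -- conjugation of the normal-form elements
  have conjmul : ∀ g x y : G (j + 3) k, g * (x * y) * g⁻¹ = (g * x * g⁻¹) * (g * y * g⁻¹) := by
    intro g x y; group
  have CU : ∀ t w : ℤ, U * (A ^ t * U ^ w) * U⁻¹ = A ^ (m₁ * t) * U ^ w := by
    intro t w
    rw [conjmul, hUconj]
    congr 1
    group
  have CV : ∀ t w : ℤ, V * (A ^ t * U ^ w) * V⁻¹ = A ^ (m₂ * t) * U ^ (-w) := by
    intro t w
    rw [conjmul, hVconj, hVUconj]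
  have CA : ∀ t w : ℤ, A * (A ^ t * U ^ (2 * w)) * A⁻¹ = A ^ t * U ^ (2 * w) := by
    intro t w
    have h1 : A * U ^ (2 * w) * A⁻¹ = U ^ (2 * w) * A * A⁻¹ := by
      have h0 := hAcommU 1 w
      rw [zpow_one] at h0
      rw [h0]
    rw [conjmul, h1]
    group
  have CU' : ∀ t w : ℤ, U⁻¹ * (A ^ t * U ^ w) * U = A ^ (m₁ * t) * U ^ w := by
    intro t w
    have h := CU (m₁ * t) w
    rw [hacongr (m₁ * (m₁ * t)) t ⟨(2 * 2 ^ j + 1) * t, by rw [hm₁]; ring⟩] at h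
    rw [← h]; group
  have CV' : ∀ t w : ℤ, V⁻¹ * (A ^ t * U ^ w) * V = A ^ (m₂ * t) * U ^ (-w) := by
    intro t w
    rw [show V⁻¹ * (A ^ t * U ^ w) * V = V * (A ^ t * U ^ w) * V⁻¹ by rw [vInv]]
    exact CV t w
  have CA' : ∀ t w : ℤ, A⁻¹ * (A ^ t * U ^ (2 * w)) * A = A ^ t * U ^ (2 * w) := by
    intro t w
    have e := CA t w
    calc A⁻¹ * (A ^ t * U ^ (2 * w)) * A
        = A⁻¹ * (A * (A ^ t * U ^ (2 * w)) * A⁻¹) * A := by rw [e]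
      _ = A ^ t * U ^ (2 * w) := by group
  -- the four elements and the set S
  set x₁ := A ^ s * U ^ (2 * i) with hx₁
  set x₂ := A ^ (m₁ * s) * U ^ (2 * i) with hx₂
  set x₃ := A ^ (m₂ * s) * U ^ (-(2 * i)) with hx₃
  set x₄ := A ^ (-s) * U ^ (-(2 * i)) with hx₄
  set S : Set (G (j + 3) k) := {x₁, x₂, x₃, x₄} with hS
  -- congruences needed
  have cUU : A ^ (m₁ * (m₁ * s)) = A ^ s :=
    hacongr _ _ ⟨(2 * 2 ^ j + 1) * s, by rw [hm₁]; ring⟩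
  have cUV : A ^ (m₁ * (m₂ * s)) = A ^ (-s) :=
    hacongr _ _ ⟨2 * 2 ^ j * s, by rw [hm₁, hm₂]; ring⟩
  have cUneg : A ^ (m₁ * (-s)) = A ^ (m₂ * s) :=
    hacongr _ _ ⟨-s, by rw [hm₁, hm₂]; ring⟩
  have cVV : A ^ (m₂ * (m₂ * s)) = A ^ s :=
    hacongr _ _ ⟨(2 * 2 ^ j - 1) * s, by rw [hm₂]; ring⟩
  have cVU : A ^ (m₂ * (m₁ * s)) = A ^ (-s) :=
    hacongr _ _ ⟨2 * 2 ^ j * s, by rw [hm₁, hm₂]; ring⟩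
  have cVneg : A ^ (m₂ * (-s)) = A ^ (m₁ * s) :=
    hacongr _ _ ⟨-s, by rw [hm₁, hm₂]; ring⟩
  -- generator stability
  have PA : ∀ z ∈ S, A * z * A⁻¹ ∈ S ∧ A⁻¹ * z * A ∈ S := by
    intro z hz
    simp only [hS, Set.mem_insert_iff, Set.mem_singleton_iff] at hz ⊢
    rw [show (-(2 * i)) = 2 * (-i) by ring] at hx₃ hx₄
    rcases hz with rfl | rfl | rfl | rfl
    · rw [hx₁]; exact ⟨Or.inl (CA s i), Or.inl (CA' s i)⟩
    · rw [hx₂]; exact ⟨Or.inr (Or.inl (CA _ i)), Or.inr (Or.inl (CA' _ i))⟩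
    · rw [hx₃]; exact ⟨Or.inr (Or.inr (Or.inl (CA _ (-i)))),
        Or.inr (Or.inr (Or.inl (CA' _ (-i))))⟩
    · rw [hx₄]; exact ⟨Or.inr (Or.inr (Or.inr (CA _ (-i)))),
        Or.inr (Or.inr (Or.inr (CA' _ (-i))))⟩
  have PU : ∀ z ∈ S, U * z * U⁻¹ ∈ S ∧ U⁻¹ * z * U ∈ S := by
    intro z hz
    simp only [hS, Set.mem_insert_iff, Set.mem_singleton_iff] at hz ⊢
    rcases hz with rfl | rfl | rfl | rfl
    · rw [hx₁, hx₂]; exact ⟨Or.inr (Or.inl (CU s _)), Or.inr (Or.inl (CU' s _))⟩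
    · rw [hx₂, hx₁]
      constructor
      · left; rw [CU _ _, cUU]
      · left; rw [CU' _ _, cUU]
    · rw [hx₃, hx₄]
      constructor
      · right; right; right; rw [CU _ _, cUV]
      · right; right; right; rw [CU' _ _, cUV]
    · rw [hx₄, hx₃]
      constructor
      · right; right; left; rw [CU _ _, cUneg]
      · right; right; left; rw [CU' _ _, cUneg]
  have PV : ∀ z ∈ S, V * z * V⁻¹ ∈ S ∧ V⁻¹ * z * V ∈ S := by
    intro z hz
    simp only [hS, Set.mem_insert_iff, Set.mem_singleton_iff] at hz ⊢
    rcases hz with rfl | rfl | rfl | rfl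
    · rw [hx₁, hx₃]; exact ⟨Or.inr (Or.inr (Or.inl (CV s _))),
        Or.inr (Or.inr (Or.inl (CV' s _)))⟩
    · rw [hx₂, hx₄]
      constructor
      · right; right; right; rw [CV _ _, cVU]
      · right; right; right; rw [CV' _ _, cVU]
    · rw [hx₃, hx₁]
      constructor
      · left; rw [CV _ _, cVV, neg_neg]
      · left; rw [CV' _ _, cVV, neg_neg]
    · rw [hx₄, hx₂]
      constructor
      · right; left; rw [CV _ _, cVneg, neg_neg]
      · right; left; rw [CV' _ _, cVneg, neg_neg]
  -- stability is closed under products and inverses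
  have Pmul : ∀ p q : G (j + 3) k,
      (∀ z ∈ S, p * z * p⁻¹ ∈ S ∧ p⁻¹ * z * p ∈ S) →
      (∀ z ∈ S, q * z * q⁻¹ ∈ S ∧ q⁻¹ * z * q ∈ S) →
      (∀ z ∈ S, (p * q) * z * (p * q)⁻¹ ∈ S ∧ (p * q)⁻¹ * z * (p * q) ∈ S) := by
    intro p q hp hq z hz
    constructor
    · have h1 := (hp _ (hq z hz).1).1
      rw [show (p * q) * z * (p * q)⁻¹ = p * (q * z * q⁻¹) * p⁻¹ by group]
      exact h1
    · have h2 := (hq _ (hp z hz).2).2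
      rw [show (p * q)⁻¹ * z * (p * q) = q⁻¹ * (p⁻¹ * z * p) * q by group]
      exact h2
  have Pinv : ∀ p : G (j + 3) k,
      (∀ z ∈ S, p * z * p⁻¹ ∈ S ∧ p⁻¹ * z * p ∈ S) →
      (∀ z ∈ S, p⁻¹ * z * (p⁻¹)⁻¹ ∈ S ∧ (p⁻¹)⁻¹ * z * p⁻¹ ∈ S) := by
    intro p hp z hz
    rw [inv_inv]
    exact ⟨(hp z hz).2, (hp z hz).1⟩
  -- all elements stabilize S under conjugation
  have key : ∀ c : G (j + 3) k, ∀ z ∈ S, c * z * c⁻¹ ∈ S ∧ c⁻¹ * z * c ∈ S := by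
    intro c
    induction c using PresentedGroup.induction_on with
    | _ w =>
      induction w using FreeGroup.induction_on with
      | C1 =>
        rw [map_one]
        intro z hz
        simpa using hz
      | of x =>
        fin_cases x
        · exact PA
        · exact PU
        · exact PV
      | inv_of x hx =>
        rw [map_inv]
        exact Pinv _ hx
      | mul x y hx hy =>
        rw [map_mul]
        exact Pmul _ _ hx hy
  -- now the set equality
  apply Set.Subset.antisymm
  · intro y hy
    obtain ⟨c, hc⟩ := isConj_iff.mp hy
    rw [← hc]
    exact (key c x₁ (Or.inl rfl)).1
  · intro y hy
    simp only [hS, Set.mem_insert_iff, Set.mem_singleton_iff] at hy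
    simp only [Set.mem_setOf_eq]
    rcases hy with rfl | rfl | rfl | rfl
    · exact IsConj.refl x₁
    · exact isConj_iff.mpr ⟨U, CU s (2 * i)⟩
    · exact isConj_iff.mpr ⟨V, CV s (2 * i)⟩
    · refine isConj_iff.mpr ⟨U * V, ?_⟩
      rw [show (U * V) * x₁ * (U * V)⁻¹ = U * (V * x₁ * V⁻¹) * U⁻¹ by group, hx₁,
        CV s (2 * i), CU _ _, cUV, hx₄]
end

section
/- Two elements a^s u^i v and a^p u^j v of G are conjugate if and only if s ≡ p (mod 2) and i ≡ j (mod 2). In particular there are exactly 4 conjugacy classes of elements of the form a^s u^i v, each of size 2^(l-2) k. -/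
namespace ZkDlProof

@[ext] structure M (b m : ℕ) where
  x : ZMod (4*b)
  y : ZMod (2*m)
  z : ZMod 2

namespace M
variable {b m : ℕ}

def N1 : ZMod (4*b) := 2*(b:ZMod (4*b))+1
def N2 : ZMod (4*b) := 2*(b:ZMod (4*b))-1

lemma four_b : (4:ZMod (4*b))*(b:ZMod (4*b)) = 0 := by
  have h : ((4*b : ℕ) : ZMod (4*b)) = 0 := ZMod.natCast_self _
  push_cast at h; exact h

lemma N1_mul_N1 : (N1 (b:=b)) * N1 = 1 := by
  unfold N1; linear_combination ((b:ZMod (4*b)) + 1) * four_b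
lemma N2_mul_N2 : (N2 (b:=b)) * N2 = 1 := by
  unfold N2; linear_combination ((b:ZMod (4*b)) - 1) * four_b
lemma N1_mul_N2 : (N1 (b:=b)) * N2 = -1 := by
  unfold N1 N2; linear_combination (b:ZMod (4*b)) * four_b

def pX : ZMod (4*b) →+* ZMod 2 := ZMod.castHom (show 2 ∣ 4*b from ⟨2*b, by ring⟩) (ZMod 2)
def pY : ZMod (2*m) →+* ZMod 2 := ZMod.castHom (show 2 ∣ 2*m from ⟨m, rfl⟩) (ZMod 2)

lemma pX_N1 : pX (N1 (b:=b)) = 1 := by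
  have h2 : pX (2 : ZMod (4*b)) = 2 := map_ofNat _ 2
  simp [N1, h2, show (2:ZMod 2) = 0 from by decide]
lemma pX_N2 : pX (N2 (b:=b)) = 1 := by
  have h2 : pX (2 : ZMod (4*b)) = 2 := map_ofNat _ 2
  simp [N2, h2, show (2:ZMod 2) = 0 from by decide]

def w (p q : ZMod 2) : ZMod (4*b) := N1 ^ p.val * N2 ^ q.val

lemma zmod2_cases : ∀ p : ZMod 2, p = 0 ∨ p = 1 := by decide
lemma zmod2_neg : ∀ p : ZMod 2, -p = p := by decide
lemma zmod2_add_self : ∀ p : ZMod 2, p + p = 0 := by decide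

lemma pow_val_add {R : Type*} [Monoid R] (x : R) (hx : x*x = 1) (p p' : ZMod 2) :
    x^(p+p').val = x^p.val * x^p'.val := by
  rcases zmod2_cases p with rfl|rfl <;> rcases zmod2_cases p' with rfl|rfl <;>
    simp [show ((0:ZMod 2)).val = 0 from rfl, show ((1:ZMod 2)).val = 1 from rfl,
      show ((1:ZMod 2)+1) = 0 from by decide, hx]

lemma w_mul (p p' q q' : ZMod 2) : w (b:=b) (p+p') (q+q') = w p q * w p' q' := by
  unfold w
  rw [pow_val_add _ N1_mul_N1, pow_val_add _ N2_mul_N2]; ring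

lemma pX_w (p q : ZMod 2) : pX (w (b:=b) p q) = 1 := by
  simp [w, pX_N1, pX_N2]

lemma w_sq (p q : ZMod 2) : w (b:=b) p q * w p q = 1 := by
  rw [← w_mul, zmod2_add_self, zmod2_add_self]
  simp [w, show ((0:ZMod 2)).val = 0 from rfl]

instance : One (M b m) := ⟨⟨0,0,0⟩⟩
instance : Mul (M b m) :=
  ⟨fun g h => ⟨g.x + w (pY g.y) g.z * h.x, g.y + (-1)^g.z.val * h.y, g.z + h.z⟩⟩
instance : Inv (M b m) :=
  ⟨fun g => ⟨-(w (pY g.y) g.z * g.x), -((-1)^g.z.val * g.y), g.z⟩⟩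

lemma mul_def (g h : M b m) :
    g * h = ⟨g.x + w (pY g.y) g.z * h.x, g.y + (-1)^g.z.val * h.y, g.z + h.z⟩ := rfl
lemma one_def : (1 : M b m) = ⟨0,0,0⟩ := rfl
lemma inv_def (g : M b m) :
    g⁻¹ = ⟨-(w (pY g.y) g.z * g.x), -((-1)^g.z.val * g.y), g.z⟩ := rfl

lemma pY_sign (z : ZMod 2) (y : ZMod (2*m)) : pY ((-1)^z.val * y) = pY y := by
  have h : pY (-1 : ZMod (2*m)) = 1 := by
    rw [map_neg, map_one]; decide
  rw [map_mul, map_pow, h, one_pow, one_mul]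

lemma sign_mul_self : ((-1 : ZMod (2*m))) * (-1) = 1 := by ring

instance : Group (M b m) where
  mul_assoc g h k := by
    ext
    · show g.x + w (pY g.y) g.z * h.x + w (pY (g.y + (-1)^g.z.val * h.y)) (g.z + h.z) * k.x
        = g.x + w (pY g.y) g.z * (h.x + w (pY h.y) h.z * k.x)
      rw [map_add, pY_sign, w_mul]; ring
    · show g.y + (-1)^g.z.val * h.y + (-1)^(g.z+h.z).val * k.y
        = g.y + (-1)^g.z.val * (h.y + (-1)^h.z.val * k.y)
      rw [pow_val_add _ sign_mul_self]; ring
    · exact add_assoc _ _ _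
  one_mul g := by
    ext <;> simp [mul_def, one_def, w, show ((0:ZMod 2)).val = 0 from rfl]
  mul_one g := by
    ext <;> simp [mul_def, one_def]
  inv_mul_cancel g := by
    ext
    · show -(w (pY g.y) g.z * g.x) + w (pY (-((-1)^g.z.val * g.y))) g.z * g.x = (0:ZMod (4*b))
      rw [map_neg, zmod2_neg, pY_sign]; ring
    · show -((-1)^g.z.val * g.y) + (-1)^g.z.val * g.y = 0
      ring
    · exact zmod2_add_self _

lemma pY_sign' (n : ℕ) : pY ((-1 : ZMod (2*m))^n) = 1 := by
  have h : pY (-1 : ZMod (2*m)) = 1 := by rw [map_neg, map_one]; decide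
  rw [map_pow, h, one_pow]

def π : M b m →* Multiplicative (ZMod 2 × ZMod 2 × ZMod 2) where
  toFun g := Multiplicative.ofAdd (pX g.x, pY g.y, g.z)
  map_one' := by simp [one_def]
  map_mul' g h := by
    show Multiplicative.ofAdd _ = Multiplicative.ofAdd _ * Multiplicative.ofAdd _
    rw [← ofAdd_add]
    congr 1
    simp only [mul_def, map_add, map_mul, pX_w, pY_sign', one_mul, Prod.mk_add_mk]

lemma π_apply (g : M b m) : π g = Multiplicative.ofAdd (pX g.x, pY g.y, g.z) := rfl

lemma v0 : (0:ZMod 2).val = 0 := rfl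
lemma v1 : (1:ZMod 2).val = 1 := rfl

lemma w00 : w (b:=b) 0 0 = 1 := by simp [w, v0]
lemma w10 : w (b:=b) 1 0 = N1 := by simp [w, v0, v1]
lemma w01 : w (b:=b) 0 1 = N2 := by simp [w, v0, v1]

def f0 : M b m := ⟨1,0,0⟩
def f1 : M b m := ⟨0,1,0⟩
def f2 : M b m := ⟨0,0,1⟩

lemma f0_pow (n : ℕ) : (f0 : M b m)^n = ⟨(n : ZMod (4*b)),0,0⟩ := by
  induction n with
  | zero => simp [one_def]
  | succ n ih => rw [pow_succ, ih]; ext <;> simp [mul_def, f0, w00, v0]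

lemma f1_pow (n : ℕ) : (f1 : M b m)^n = ⟨0,(n : ZMod (2*m)),0⟩ := by
  induction n with
  | zero => simp [one_def]
  | succ n ih => rw [pow_succ, ih]; ext <;> simp [mul_def, f1, w00, v0]

lemma f2_pow (n : ℕ) : (f2 : M b m)^n = ⟨0,0,(n : ZMod 2)⟩ := by
  induction n with
  | zero => simp [one_def]
  | succ n ih => rw [pow_succ, ih]; ext <;> simp [mul_def, f2, v0]

def f : Fin 3 → M b m := ![f0, f1, f2]

section rel
variable {l : ℕ} (h4 : 2^l = 4*b) (h2 : 2^(l-1) = 2*b) (hl : 3 ≤ l)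

include h4 h2 hl in
lemma rels_hold : ∀ r ∈ ZkDl.rels l (2*m), (FreeGroup.lift (f (b:=b) (m:=m))) r = 1 := by
  intro r hr
  have hN1 : ((ZkDl.n₁ l : ℕ) : ZMod (4*b)) = N1 := by
    unfold ZkDl.n₁ N1; push_cast [h2]; push_cast; ring
  have hN2 : ((ZkDl.n₂ l : ℕ) : ZMod (4*b)) = N2 := by
    unfold ZkDl.n₂ N2
    have h1 : 1 ≤ 2^(l-1) := Nat.one_le_two_pow
    rw [Nat.cast_sub h1]; push_cast [h2]; push_cast; ring
  rcases hr with rfl|rfl|rfl|rfl|rfl|hr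
  · rw [map_pow, FreeGroup.lift_apply_of]
    show (f0 : M b m)^(2^l) = 1
    rw [f0_pow, h4]
    ext <;> simp [one_def]
  · rw [map_pow, FreeGroup.lift_apply_of]
    show (f1 : M b m)^(2*m) = 1
    rw [f1_pow]
    ext <;> simp [one_def]
  · rw [map_pow, FreeGroup.lift_apply_of]
    show (f2 : M b m)^2 = 1
    rw [f2_pow]
    ext <;> simp [one_def]; decide
  · simp only [map_mul, map_inv, map_pow, FreeGroup.lift_apply_of]
    show (f1 : M b m) * f0 * f1⁻¹ * (f0 ^ ZkDl.n₁ l)⁻¹ = 1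
    rw [f0_pow, hN1, mul_inv_eq_one]
    ext <;> simp [mul_def, inv_def, f0, f1, w00, w10, v0, v1]
  · simp only [map_mul, map_inv, map_pow, FreeGroup.lift_apply_of]
    show (f2 : M b m) * f0 * f2 * (f0 ^ ZkDl.n₂ l)⁻¹ = 1
    rw [f0_pow, hN2, mul_inv_eq_one]
    ext <;> simp [mul_def, f0, f2, w00, w10, w01, v0, v1,
      show ((1:ZMod 2)+1) = 0 from by decide]
  · rcases hr with rfl
    simp only [map_mul, FreeGroup.lift_apply_of]
    show (f2 : M b m) * f1 * f2 * f1 = 1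
    ext <;> simp [mul_def, one_def, f1, f2, v0, v1,
      show ((1:ZMod 2)+1) = 0 from by decide]

def φ : ZkDl.G l (2*m) →* M b m := PresentedGroup.toGroup (rels_hold h4 h2 hl)

lemma φ_a : φ h4 h2 hl (ZkDl.a l (2*m)) = f0 (b:=b) (m:=m) := PresentedGroup.toGroup.of _
lemma φ_u : φ h4 h2 hl (ZkDl.u l (2*m)) = f1 (b:=b) (m:=m) := PresentedGroup.toGroup.of _
lemma φ_v : φ h4 h2 hl (ZkDl.v l (2*m)) = f2 (b:=b) (m:=m) := PresentedGroup.toGroup.of _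

end rel

end M

section Gside

open ZkDl

variable {l k : ℕ}

lemma mk_rel {r : FreeGroup (Fin 3)} (hr : r ∈ rels l k) :
    PresentedGroup.mk (rels l k) r = 1 :=
  (QuotientGroup.eq_one_iff r).2 (Subgroup.subset_normalClosure hr)

lemma ra : (a l k)^(2^l) = 1 := by
  have := mk_rel (l:=l) (k:=k) (r := FreeGroup.of 0 ^ 2^l) (by simp [rels])
  rwa [map_pow] at this

lemma ru : (u l k)^k = 1 := by
  have := mk_rel (l:=l) (k:=k) (r := FreeGroup.of 1 ^ k) (by simp [rels])
  rwa [map_pow] at this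

lemma rv : (v l k)^2 = 1 := by
  have := mk_rel (l:=l) (k:=k) (r := FreeGroup.of 2 ^ 2) (by simp [rels])
  rwa [map_pow] at this

lemma v_inv : (v l k)⁻¹ = v l k := by
  have h := rv (l:=l) (k:=k)
  rw [pow_two] at h
  exact inv_eq_of_mul_eq_one_right h

lemma ruau : u l k * a l k * (u l k)⁻¹ = (a l k)^(n₁ l) := by
  have := mk_rel (l:=l) (k:=k)
    (r := FreeGroup.of 1 * FreeGroup.of 0 * (FreeGroup.of 1)⁻¹ * (FreeGroup.of 0 ^ n₁ l)⁻¹)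
    (by simp [rels])
  rw [map_mul, map_mul, map_mul, map_inv, map_inv, map_pow, mul_inv_eq_one] at this
  exact this

lemma rvav : v l k * a l k * v l k = (a l k)^(n₂ l) := by
  have := mk_rel (l:=l) (k:=k)
    (r := FreeGroup.of 2 * FreeGroup.of 0 * FreeGroup.of 2 * (FreeGroup.of 0 ^ n₂ l)⁻¹)
    (by simp [rels])
  rw [map_mul, map_mul, map_mul, map_inv, map_pow, mul_inv_eq_one] at this
  exact this

lemma rvuv : v l k * u l k * v l k = (u l k)⁻¹ := by
  have := mk_rel (l:=l) (k:=k)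
    (r := FreeGroup.of 2 * FreeGroup.of 1 * FreeGroup.of 2 * FreeGroup.of 1)
    (by simp [rels])
  rw [map_mul, map_mul, map_mul] at this
  exact eq_inv_of_mul_eq_one_left this

lemma conj_zpow_eq {H : Type*} [Group H] (g h : H) (x : ℤ) :
    g * h^x * g⁻¹ = (g * h * g⁻¹)^x := by
  simpa [MulAut.conj_apply] using (map_zpow (MulAut.conj g) h x).symm

-- moving a-powers past u and v
lemma u_conj (x : ℤ) : u l k * (a l k)^x * (u l k)⁻¹ = (a l k)^((n₁ l : ℤ) * x) := by
  rw [conj_zpow_eq, ruau, ← zpow_natCast, ← zpow_mul, mul_comm (n₁ l : ℤ)]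

lemma v_conj (x : ℤ) : v l k * (a l k)^x * (v l k)⁻¹ = (a l k)^((n₂ l : ℤ) * x) := by
  rw [conj_zpow_eq]
  rw [show v l k * a l k * (v l k)⁻¹ = v l k * a l k * v l k from by rw [v_inv], rvav,
    ← zpow_natCast, ← zpow_mul, mul_comm (n₂ l : ℤ), zpow_mul, zpow_natCast]

lemma v_conj_u (y : ℤ) : v l k * (u l k)^y * (v l k)⁻¹ = (u l k)^(-y) := by
  rw [conj_zpow_eq]
  rw [show v l k * u l k * (v l k)⁻¹ = v l k * u l k * v l k from by rw [v_inv], rvuv]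
  rw [← zpow_neg_one, ← zpow_mul, neg_one_mul]

lemma n₁_sq (hl : 3 ≤ l) : n₁ l * n₁ l = 2^l * (2^(l-2)+1) + 1 := by
  unfold n₁
  have h : 2^(l-1)*2^(l-1) = 2^l * 2^(l-2) := by
    rw [← pow_add, ← pow_add]; congr 1; omega
  have h2 : 2^(l-1)*2 = 2^l := by rw [← pow_succ]; congr 1; omega
  nlinarith [h, h2]

lemma u_inv_conj (hl : 3 ≤ l) (x : ℤ) :
    (u l k)⁻¹ * (a l k)^x * u l k = (a l k)^((n₁ l : ℤ) * x) := by
  have key : u l k * ((a l k)^(n₁ l : ℤ))^x * (u l k)⁻¹ = (a l k)^x := by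
    rw [← zpow_mul, conj_zpow_eq]
    rw [show u l k * a l k * (u l k)⁻¹ = (a l k)^(n₁ l) from ruau, ← zpow_natCast, ← zpow_mul]
    have h' : ((n₁ l : ℤ)) * (n₁ l : ℤ) = 2^l * (2^(l-2)+1) + 1 := by
      exact_mod_cast congrArg (fun t : ℕ => (t : ℤ)) (n₁_sq (l:=l) hl)
    have : ((n₁ l : ℤ)) * ((n₁ l : ℤ) * x) = x + (2^l * ((2^(l-2)+1) * x)) := by
      linear_combination x * h' 
    rw [this, zpow_add, zpow_mul]
    rw [show ((2:ℤ)^l) = ((2^l : ℕ) : ℤ) from by push_cast; ring, zpow_natCast, ra]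
    simp
  calc (u l k)⁻¹ * (a l k)^x * u l k
      = (u l k)⁻¹ * (u l k * ((a l k)^(n₁ l : ℤ))^x * (u l k)⁻¹) * u l k := by rw [key]
    _ = ((a l k)^(n₁ l : ℤ))^x := by group
    _ = (a l k)^((n₁ l : ℤ) * x) := by rw [← zpow_mul]

lemma Hu (hl : 3 ≤ l) (y : ℤ) :
    ∀ x : ℤ, ∃ x' : ℤ, (u l k)^y * (a l k)^x = (a l k)^x' * (u l k)^y := by
  induction y using Int.induction_on with
  | zero => exact fun x => ⟨x, by simp⟩
  | succ n ih =>
    intro x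
    obtain ⟨x', hx'⟩ := ih ((n₁ l : ℤ) * x)
    refine ⟨x', ?_⟩
    have : (u l k)^((n:ℤ)+1) = (u l k)^(n:ℤ) * u l k := by rw [zpow_add, zpow_one]
    rw [this, mul_assoc, show u l k * (a l k)^x = (a l k)^((n₁ l:ℤ)*x) * u l k from
      mul_inv_eq_iff_eq_mul.mp (u_conj x), ← mul_assoc, hx', mul_assoc]
  | pred n ih =>
    intro x
    obtain ⟨x', hx'⟩ := ih ((n₁ l : ℤ) * x)
    refine ⟨x', ?_⟩
    have : (u l k)^(-(n:ℤ)-1) = (u l k)^(-(n:ℤ)) * (u l k)⁻¹ := by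
      rw [← zpow_neg_one, ← zpow_add]; ring_nf
    rw [this, mul_assoc, show (u l k)⁻¹ * (a l k)^x = (a l k)^((n₁ l:ℤ)*x) * (u l k)⁻¹ from
      eq_mul_inv_iff_mul_eq.mpr (u_inv_conj hl x), ← mul_assoc, hx', mul_assoc]

lemma Hv (z : ℤ) :
    ∀ x : ℤ, ∃ x' : ℤ, (v l k)^z * (a l k)^x = (a l k)^x' * (v l k)^z := by
  induction z using Int.induction_on with
  | zero => exact fun x => ⟨x, by simp⟩
  | succ n ih =>
    intro x
    obtain ⟨x', hx'⟩ := ih ((n₂ l : ℤ) * x)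
    refine ⟨x', ?_⟩
    have : (v l k)^((n:ℤ)+1) = (v l k)^(n:ℤ) * v l k := by rw [zpow_add, zpow_one]
    rw [this, mul_assoc, show v l k * (a l k)^x = (a l k)^((n₂ l:ℤ)*x) * v l k from
      mul_inv_eq_iff_eq_mul.mp (v_conj x), ← mul_assoc, hx', mul_assoc]
  | pred n ih =>
    intro x
    obtain ⟨x', hx'⟩ := ih ((n₂ l : ℤ) * x)
    refine ⟨x', ?_⟩
    have hv : (v l k)^(-(n:ℤ)-1) = (v l k)^(-(n:ℤ)) * (v l k)⁻¹ := by
      rw [← zpow_neg_one, ← zpow_add]; ring_nf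
    rw [hv, mul_assoc, show (v l k)⁻¹ * (a l k)^x = (a l k)^((n₂ l:ℤ)*x) * (v l k)⁻¹ from by
      rw [v_inv]; exact mul_inv_eq_iff_eq_mul.mp (v_conj x), ← mul_assoc, hx', mul_assoc]

lemma Hvu (z : ℤ) :
    ∀ y : ℤ, ∃ y' : ℤ, (v l k)^z * (u l k)^y = (u l k)^y' * (v l k)^z := by
  induction z using Int.induction_on with
  | zero => exact fun y => ⟨y, by simp⟩
  | succ n ih =>
    intro y
    obtain ⟨y', hy'⟩ := ih (-y)
    refine ⟨y', ?_⟩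
    have : (v l k)^((n:ℤ)+1) = (v l k)^(n:ℤ) * v l k := by rw [zpow_add, zpow_one]
    rw [this, mul_assoc, show v l k * (u l k)^y = (u l k)^(-y) * v l k from
      mul_inv_eq_iff_eq_mul.mp (v_conj_u y), ← mul_assoc, hy', mul_assoc]
  | pred n ih =>
    intro y
    obtain ⟨y', hy'⟩ := ih (-y)
    refine ⟨y', ?_⟩
    have hv : (v l k)^(-(n:ℤ)-1) = (v l k)^(-(n:ℤ)) * (v l k)⁻¹ := by
      rw [← zpow_neg_one, ← zpow_add]; ring_nf
    rw [hv, mul_assoc, show (v l k)⁻¹ * (u l k)^y = (u l k)^(-y) * (v l k)⁻¹ from by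
      rw [v_inv]; exact mul_inv_eq_iff_eq_mul.mp (v_conj_u y), ← mul_assoc, hy', mul_assoc]

def S (l k : ℕ) (hl : 3 ≤ l) : Subgroup (G l k) where
  carrier := {g | ∃ x y z : ℤ, g = (a l k)^x * (u l k)^y * (v l k)^z}
  one_mem' := ⟨0, 0, 0, by simp⟩
  mul_mem' := by
    rintro g h ⟨x, y, z, rfl⟩ ⟨p, q, r, rfl⟩
    obtain ⟨p₁, h1⟩ := Hv (l:=l) (k:=k) z p
    obtain ⟨p₂, h2⟩ := Hu (l:=l) (k:=k) hl y p₁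
    obtain ⟨q₁, h3⟩ := Hvu (l:=l) (k:=k) z q
    refine ⟨x + p₂, y + q₁, z + r, ?_⟩
    calc (a l k)^x * (u l k)^y * (v l k)^z * ((a l k)^p * (u l k)^q * (v l k)^r)
        = (a l k)^x * (u l k)^y * ((v l k)^z * (a l k)^p) * ((u l k)^q * (v l k)^r) := by
          group
      _ = (a l k)^x * ((u l k)^y * (a l k)^p₁) * ((v l k)^z * (u l k)^q) * (v l k)^r := by
          rw [h1]; group
      _ = (a l k)^x * ((a l k)^p₂ * (u l k)^y) * ((u l k)^q₁ * (v l k)^z) * (v l k)^r := by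
          rw [h2, h3]
      _ = (a l k)^(x+p₂) * (u l k)^(y+q₁) * (v l k)^(z+r) := by
          rw [zpow_add, zpow_add, zpow_add]; group
  inv_mem' := by
    rintro g ⟨x, y, z, rfl⟩
    obtain ⟨x₁, h1⟩ := Hu (l:=l) (k:=k) hl (-y) (-x)
    obtain ⟨x₂, h2⟩ := Hv (l:=l) (k:=k) (-z) x₁
    obtain ⟨y₁, h3⟩ := Hvu (l:=l) (k:=k) (-z) (-y)
    refine ⟨x₂, y₁, -z, ?_⟩
    calc ((a l k)^x * (u l k)^y * (v l k)^z)⁻¹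
        = (v l k)^(-z) * ((u l k)^(-y) * (a l k)^(-x)) := by
          rw [zpow_neg, zpow_neg, zpow_neg]; group
      _ = (v l k)^(-z) * ((a l k)^x₁ * (u l k)^(-y)) := by rw [h1]
      _ = ((v l k)^(-z) * (a l k)^x₁) * ((v l k)^(-z))⁻¹ * ((v l k)^(-z) * (u l k)^(-y)) := by
          group
      _ = ((a l k)^x₂ * (v l k)^(-z)) * ((v l k)^(-z))⁻¹ * ((u l k)^y₁ * (v l k)^(-z)) := by
          rw [h2, h3]
      _ = (a l k)^x₂ * (u l k)^y₁ * (v l k)^(-z) := by group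

lemma mem_S (hl : 3 ≤ l) (g : G l k) :
    ∃ x y z : ℤ, g = (a l k)^x * (u l k)^y * (v l k)^z := by
  have := PresentedGroup.generated_by (rels l k) (S l k hl) ?_ g
  · exact this
  · intro j
    fin_cases j
    · exact ⟨1, 0, 0, by simp; rfl⟩
    · exact ⟨0, 1, 0, by simp; rfl⟩
    · exact ⟨0, 0, 1, by simp; rfl⟩

end Gside

section Iso

open ZkDl M

variable {l b m : ℕ}

lemma f0_zpow (x : ℤ) : (f0 : M b m)^x = ⟨(x : ZMod (4*b)),0,0⟩ := by
  rcases x with n | n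
  · rw [Int.ofNat_eq_coe, zpow_natCast, f0_pow]; push_cast; rfl
  · rw [zpow_negSucc, f0_pow]
    ext <;> simp [inv_def, w00, v0, Int.cast_negSucc]

lemma f1_zpow (y : ℤ) : (f1 : M b m)^y = ⟨0,(y : ZMod (2*m)),0⟩ := by
  rcases y with n | n
  · rw [Int.ofNat_eq_coe, zpow_natCast, f1_pow]; push_cast; rfl
  · rw [zpow_negSucc, f1_pow]
    ext <;> simp [inv_def, w00, v0, Int.cast_negSucc]

lemma f2_zpow (z : ℤ) : (f2 : M b m)^z = ⟨0,0,(z : ZMod 2)⟩ := by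
  rcases z with n | n
  · rw [Int.ofNat_eq_coe, zpow_natCast, f2_pow]; push_cast; rfl
  · rw [zpow_negSucc, f2_pow]
    ext <;> simp [inv_def, w00, v0, Int.cast_negSucc, zmod2_neg] <;> try ring

variable (h4 : 2^l = 4*b) (h2 : 2^(l-1) = 2*b) (hl : 3 ≤ l)

lemma φ_norm (x y z : ℤ) :
    φ h4 h2 hl ((a l (2*m))^x * (u l (2*m))^y * (v l (2*m))^z)
      = ⟨(x : ZMod (4*b)), (y : ZMod (2*m)), (z : ZMod 2)⟩ := by
  rw [map_mul, map_mul, map_zpow, map_zpow, map_zpow, φ_a, φ_u, φ_v,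
    f0_zpow, f1_zpow, f2_zpow]
  ext <;> simp [mul_def, w00, v0]

lemma zpow_eq_of_cast_eq {H : Type*} [Group H] {g : H} {n : ℕ} (hg : g^n = 1)
    {x p : ℤ} (h : (x : ZMod n) = p) : g^x = g^p := by
  have hd : (n : ℤ) ∣ x - p := by
    have := (ZMod.intCast_eq_intCast_iff x p n).mp h
    exact Int.ModEq.dvd this.symm
  obtain ⟨t, ht⟩ := hd
  have hx : x = p + n * t := by omega
  rw [hx, zpow_add, zpow_mul, zpow_natCast, hg, one_zpow, mul_one]

lemma φ_bij : Function.Bijective (φ (b:=b) (m:=m) h4 h2 hl) := by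
  constructor
  · intro g g' h
    obtain ⟨x, y, z, rfl⟩ := mem_S hl g
    obtain ⟨p, q, r, rfl⟩ := mem_S hl g'
    rw [φ_norm, φ_norm, M.mk.injEq] at h
    obtain ⟨e1, e2, e3⟩ := h
    rw [zpow_eq_of_cast_eq (show (a l (2*m))^(4*b) = 1 from h4 ▸ ra) e1,
      zpow_eq_of_cast_eq (ru (l:=l) (k:=2*m)) e2,
      zpow_eq_of_cast_eq (rv (l:=l) (k:=2*m)) e3]
  · intro g
    refine ⟨(a l (2*m))^((g.x.cast : ℤ)) * (u l (2*m))^((g.y.cast : ℤ))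
      * (v l (2*m))^((g.z.cast : ℤ)), ?_⟩
    rw [φ_norm]
    ext <;> simp [ZMod.intCast_zmod_cast]

noncomputable def eIso : G l (2*m) ≃* M b m :=
  MulEquiv.ofBijective (φ h4 h2 hl) (φ_bij h4 h2 hl)

lemma isConj_iff_φ (g g' : G l (2*m)) :
    IsConj g g' ↔ IsConj (φ h4 h2 hl g) (φ h4 h2 hl g') := by
  constructor
  · exact (φ h4 h2 hl).map_isConj
  · intro hc
    have := ((eIso h4 h2 hl).symm.toMonoidHom).map_isConj hc
    have h' : ∀ x : G l (2*m), (eIso h4 h2 hl).symm (φ h4 h2 hl x) = x := fun x =>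
      (eIso h4 h2 hl).symm_apply_apply x
    simp only [MulEquiv.coe_toMonoidHom] at this
    rwa [h', h'] at this

end Iso

section ConjM

open M

variable {b m : ℕ}

lemma π_eq_iff (g h : M b m) :
    π g = π h ↔ (pX g.x = pX h.x ∧ pY g.y = pY h.y ∧ g.z = h.z) := by
  rw [π_apply, π_apply, Equiv.apply_eq_iff_eq, Prod.mk.injEq, Prod.mk.injEq]
  try tauto

lemma isConj_π_eq {g h : M b m} (hc : IsConj g h) : π g = π h := by
  obtain ⟨c, hc⟩ := isConj_iff.mp hc
  rw [← hc, map_mul, map_mul, map_inv, mul_comm (π c) (π g), mul_assoc,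
    mul_inv_cancel]
  try rw [mul_one]

lemma exists_half {n : ℕ} (hn : 2 ∣ n) {d : ZMod n}
    (hd : ZMod.castHom hn (ZMod 2) d = 0) : ∃ c : ZMod n, d = 2*c := by
  have key : (((d.cast : ℤ)) : ZMod n) = d := ZMod.intCast_zmod_cast d
  have h2 : ((d.cast : ℤ) : ZMod 2) = 0 := by
    rw [← key] at hd; rwa [map_intCast] at hd
  obtain ⟨t, ht⟩ := (ZMod.intCast_zmod_eq_zero_iff_dvd _ 2).mp (by exact_mod_cast h2)
  refine ⟨((t : ℤ) : ZMod n), ?_⟩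
  rw [← key, ht]
  push_cast
  ring

lemma conj_by_y (c : ZMod (2*m)) (g : M b m) (hz : g.z = 1) :
    (⟨0,c,0⟩ : M b m) * g * (⟨0,c,0⟩ : M b m)⁻¹ = ⟨w (pY c) 0 * g.x, g.y + 2*c, 1⟩ := by
  ext <;> simp [mul_def, inv_def, v0, v1, hz] <;> ring

lemma conj_by_x (t : ZMod (4*b)) (g : M b m) (hz : g.z = 1) :
    (⟨t,0,0⟩ : M b m) * g * (⟨t,0,0⟩ : M b m)⁻¹
      = ⟨g.x + (1 - w (pY g.y) 1) * t, g.y, 1⟩ := by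
  ext <;> simp [mul_def, inv_def, w00, v0, v1, hz] <;> ring

variable {l : ℕ} (h4 : 2^l = 4*b) (hbe : 2 ∣ b)

include h4 in
lemma isUnit_of_pX_one {x : ZMod (4*b)} (hx : pX x = 1) : IsUnit x := by
  haveI : NeZero (4*b) := ⟨by rw [← h4]; positivity⟩
  have hval : ((x.val : ℕ) : ZMod (4*b)) = x := by rw [ZMod.natCast_val, ZMod.cast_id]
  rw [← hval]
  rw [ZMod.isUnit_iff_coprime]
  have hpx : pX x = ((x.val : ℕ) : ZMod 2) := by
    conv_lhs => rw [← hval]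
    rw [map_natCast]
  have hodd : ¬ (2 ∣ x.val) := by
    intro hdvd
    have h0 : ((x.val : ℕ) : ZMod 2) = 0 := (ZMod.natCast_eq_zero_iff _ 2).mpr hdvd
    rw [hpx, h0] at hx
    exact absurd hx (by decide)
  have hc2 : Nat.Coprime x.val 2 :=
    Nat.Coprime.symm ((Nat.Prime.coprime_iff_not_dvd Nat.prime_two).mpr hodd)
  have hcl : Nat.Coprime x.val (2^l) := Nat.Coprime.pow_right l hc2
  rwa [h4] at hcl

include h4 hbe in
lemma exists_t (p : ZMod 2) (x x' : ZMod (4*b)) (hx : pX x = pX x') :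
    ∃ t : ZMod (4*b), x + (1 - w p 1) * t = x' := by
  -- 1 - w p 1 = 2 * c₀ with c₀ a unit
  obtain ⟨c₀, hc₀, hu⟩ : ∃ c₀ : ZMod (4*b), 1 - w p 1 = 2 * c₀ ∧ IsUnit c₀ := by
    rcases zmod2_cases p with rfl|rfl
    · refine ⟨1 - (b : ZMod (4*b)), ?_, isUnit_of_pX_one h4 ?_⟩
      · rw [w01]; unfold N2; ring
      · obtain ⟨b', rfl⟩ := hbe
        rw [map_sub, map_one, map_natCast]
        push_cast
        rw [show ((2:ZMod 2)) = 0 from by decide]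
        ring
    · refine ⟨1, ?_, isUnit_one⟩
      rw [w, v1, pow_one, pow_one, N1_mul_N2]
      ring
  have hd : pX (x' - x) = 0 := by rw [map_sub, hx]; ring
  obtain ⟨e, he⟩ := exists_half (show 2 ∣ 4*b from ⟨2*b, by ring⟩) hd
  obtain ⟨cu, hcu⟩ := hu
  refine ⟨(cu⁻¹ : Units (ZMod (4*b))) * e, ?_⟩
  rw [hc₀]
  have : (2:ZMod (4*b)) * c₀ * ((cu⁻¹ : Units (ZMod (4*b))) * e) = 2 * e := by
    rw [← hcu]
    have h1 : (cu : ZMod (4*b)) * (cu⁻¹ : Units (ZMod (4*b))) = 1 := by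
      rw [← Units.val_mul, mul_inv_cancel, Units.val_one]
    calc (2:ZMod (4*b)) * cu * ((cu⁻¹ : Units (ZMod (4*b))) * e)
        = 2 * ((cu : ZMod (4*b)) * (cu⁻¹ : Units (ZMod (4*b)))) * e := by ring
      _ = 2 * e := by rw [h1]; ring
  rw [this, ← he]
  ring

include h4 hbe in
lemma conjM {g h : M b m} (hgz : g.z = 1) (hhz : h.z = 1) :
    IsConj g h ↔ π g = π h := by
  constructor
  · exact isConj_π_eq
  · rintro hπ
    obtain ⟨e1, e2, _⟩ := (π_eq_iff g h).mp hπ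
    -- step 1 : adjust y
    have hd : pY (h.y - g.y) = 0 := by rw [map_sub, e2]; ring
    obtain ⟨c, hc⟩ := exists_half (show 2 ∣ 2*m from ⟨m, rfl⟩) hd
    set g1 : M b m := ⟨w (pY c) 0 * g.x, h.y, 1⟩ with hg1
    have step1 : IsConj g g1 := by
      rw [isConj_iff]
      refine ⟨⟨0,c,0⟩, ?_⟩
      have := conj_by_y c g hgz
      rw [this, hg1]
      congr 1
      rw [← hc]
      ring
    have step2 : IsConj g1 h := by
      rw [isConj_iff]
      have hpx : pX g1.x = pX h.x := by
        rw [hg1]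
        show pX (w (pY c) 0 * g.x) = pX h.x
        rw [map_mul, pX_w, one_mul, e1]
      obtain ⟨t, ht⟩ := exists_t h4 hbe (pY h.y) g1.x h.x hpx
      refine ⟨⟨t,0,0⟩, ?_⟩
      have := conj_by_x t g1 (show g1.z = 1 from rfl)
      rw [this]
      have hy1 : g1.y = h.y := rfl
      rw [hy1, ht]
      ext
      · rfl
      · rfl
      · exact hhz.symm
    exact step1.trans step2

end ConjM

section Count

open ZkDl M

variable {b m : ℕ}

lemma π_surj : Function.Surjective (π : M b m →* _) := by
  intro t
  set c := Multiplicative.toAdd t with hc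
  haveI : NeZero (2 : ℕ) := ⟨by norm_num⟩
  refine ⟨⟨((c.1.val : ℕ) : ZMod (4*b)), ((c.2.1.val : ℕ) : ZMod (2*m)), c.2.2⟩, ?_⟩
  rw [π_apply]
  have h1 : pX (((c.1.val : ℕ)) : ZMod (4*b)) = c.1 := by
    rw [map_natCast, ZMod.natCast_val, ZMod.cast_id]
  have h2 : pY (((c.2.1.val : ℕ)) : ZMod (2*m)) = c.2.1 := by
    rw [map_natCast, ZMod.natCast_val, ZMod.cast_id]
  rw [h1, h2]
  exact ofAdd_toAdd t

lemma card_target : Nat.card (Multiplicative (ZMod 2 × ZMod 2 × ZMod 2)) = 8 := by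
  simp [Nat.card_eq_fintype_card]

lemma card_M : Nat.card (M b m) = 4*b * (2*m * 2) := by
  have e : M b m ≃ (ZMod (4*b) × ZMod (2*m) × ZMod 2) :=
    ⟨fun g => (g.x, g.y, g.z), fun p => ⟨p.1, p.2.1, p.2.2⟩, fun g => rfl, fun p => rfl⟩
  rw [Nat.card_congr e, Nat.card_prod, Nat.card_prod, Nat.card_zmod, Nat.card_zmod,
    Nat.card_zmod]

lemma card_ker : Nat.card (π : M b m →* _).ker = b * (2*m) := by
  have h := Subgroup.card_eq_card_quotient_mul_card_subgroup (π : M b m →* _).ker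
  rw [card_M,
    Nat.card_congr (QuotientGroup.quotientKerEquivOfSurjective _ π_surj).toEquiv,
    card_target] at h
  have h8 : 8 * (b * (2*m)) = 8 * Nat.card (π : M b m →* _).ker := by
    rw [← h]; ring
  exact (Nat.eq_of_mul_eq_mul_left (by norm_num) h8).symm

variable {l : ℕ} (h4 : 2^l = 4*b) (hbe : 2 ∣ b)

include h4 hbe in
lemma class_ncard {g : M b m} (hz : g.z = 1) :
    {h : M b m | IsConj g h}.ncard = b * (2*m) := by
  have hset : {h : M b m | IsConj g h}
      = (fun h => g * h) '' ((π : M b m →* _).ker : Set (M b m)) := by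
    ext h
    simp only [Set.mem_setOf_eq, Set.mem_image, SetLike.mem_coe]
    constructor
    · intro hc
      have hπ := isConj_π_eq hc
      refine ⟨g⁻¹ * h, ?_, by group⟩
      rw [MonoidHom.mem_ker, map_mul, map_inv, ← hπ, inv_mul_cancel]
    · rintro ⟨k0, hk0, rfl⟩
      rw [MonoidHom.mem_ker] at hk0
      have hπ : π (g * k0) = π g := by rw [map_mul, hk0, mul_one]
      have hz2 : (g * k0).z = 1 := by
        have := ((π_eq_iff (g*k0) g).mp hπ).2.2
        rw [this, hz]
      exact (conjM h4 hbe hz hz2).mpr hπ.symm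
  rw [hset, Set.ncard_image_of_injective _ (mul_right_injective g),
    ← Nat.card_coe_set_eq]
  exact card_ker

end Count

section Main

open ZkDl M

variable {l b m : ℕ} (h4 : 2^l = 4*b) (h2 : 2^(l-1) = 2*b) (hl : 3 ≤ l) (hbe : 2 ∣ b)

include h4 h2 hl hbe in
lemma main_iff (s i p j : ℤ) :
    IsConj (a l (2*m) ^ s * u l (2*m) ^ i * v l (2*m))
        (a l (2*m) ^ p * u l (2*m) ^ j * v l (2*m)) ↔
      (s ≡ p [ZMOD 2] ∧ i ≡ j [ZMOD 2]) := by
  have hv1 : ∀ s i : ℤ, a l (2*m) ^ s * u l (2*m) ^ i * v l (2*m)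
      = a l (2*m) ^ s * u l (2*m) ^ i * v l (2*m) ^ (1:ℤ) := by
    intro s i; rw [zpow_one]
  rw [hv1 s i, hv1 p j, isConj_iff_φ h4 h2 hl, φ_norm, φ_norm,
    conjM h4 hbe (show ((1:ℤ) : ZMod 2) = 1 from by norm_num)
      (show ((1:ℤ) : ZMod 2) = 1 from by norm_num),
    π_eq_iff]
  simp only [map_intCast]
  constructor
  · rintro ⟨hA, hB, -⟩
    exact ⟨(ZMod.intCast_eq_intCast_iff s p 2).mp hA,
      (ZMod.intCast_eq_intCast_iff i j 2).mp hB⟩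
  · rintro ⟨hA, hB⟩
    exact ⟨(ZMod.intCast_eq_intCast_iff s p 2).mpr hA,
      (ZMod.intCast_eq_intCast_iff i j 2).mpr hB, trivial⟩

include h4 h2 hl hbe in
lemma main_count (s i : ℤ) :
    {y : G l (2*m) | IsConj (a l (2*m) ^ s * u l (2*m) ^ i * v l (2*m)) y}.ncard
      = b * (2*m) := by
  set x := a l (2*m) ^ s * u l (2*m) ^ i * v l (2*m) with hx
  have hseteq : {y : G l (2*m) | IsConj x y}
      = (φ h4 h2 hl) ⁻¹' {h : M b m | IsConj (φ h4 h2 hl x) h} := by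
    ext y
    simp only [Set.mem_setOf_eq, Set.mem_preimage]
    exact isConj_iff_φ h4 h2 hl x y
  rw [hseteq]
  have hcoe : (⇑(φ h4 h2 hl)) ⁻¹' {h : M b m | IsConj (φ h4 h2 hl x) h}
      = (⇑(eIso (m:=m) h4 h2 hl).toEquiv) ⁻¹' {h : M b m | IsConj (φ h4 h2 hl x) h} := rfl
  rw [hcoe, ← Equiv.image_symm_eq_preimage,
    Set.ncard_image_of_injective _ (Equiv.injective _)]
  have hφx : φ h4 h2 hl x = ⟨((s:ℤ) : ZMod (4*b)), ((i:ℤ) : ZMod (2*m)), ((1:ℤ) : ZMod 2)⟩ := by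
    rw [hx, show v l (2*m) = v l (2*m) ^ (1:ℤ) from (zpow_one _).symm, φ_norm]
  rw [hφx]
  exact class_ncard h4 hbe (by norm_num)

lemma int_mod2_zero {s : ℤ} (hs : Even s) : s ≡ 0 [ZMOD 2] := by
  obtain ⟨c, rfl⟩ := hs
  unfold Int.ModEq
  omega

lemma int_mod2_one {s : ℤ} (hs : Odd s) : s ≡ 1 [ZMOD 2] := by
  obtain ⟨c, rfl⟩ := hs
  unfold Int.ModEq
  omega

include h4 h2 hl hbe in
lemma main_classes :
    {C : ConjClasses (G l (2*m)) |
        ∃ s i : ℤ, C = ConjClasses.mk (a l (2*m) ^ s * u l (2*m) ^ i * v l (2*m))}.ncard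
      = 4 := by
  set A := a l (2*m)
  set U := u l (2*m)
  set V := v l (2*m)
  have hiff := main_iff (m:=m) h4 h2 hl hbe
  have hmk : ∀ s i p j : ℤ,
      ConjClasses.mk (A^s * U^i * V) = ConjClasses.mk (A^p * U^j * V)
        ↔ (s ≡ p [ZMOD 2] ∧ i ≡ j [ZMOD 2]) := by
    intro s i p j
    rw [ConjClasses.mk_eq_mk_iff_isConj]
    exact hiff s i p j
  have hset : {C : ConjClasses (G l (2*m)) | ∃ s i : ℤ, C = ConjClasses.mk (A^s * U^i * V)}
      = {ConjClasses.mk (A^(0:ℤ) * U^(0:ℤ) * V), ConjClasses.mk (A^(0:ℤ) * U^(1:ℤ) * V),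
          ConjClasses.mk (A^(1:ℤ) * U^(0:ℤ) * V), ConjClasses.mk (A^(1:ℤ) * U^(1:ℤ) * V)} := by
    ext C
    simp only [Set.mem_setOf_eq, Set.mem_insert_iff, Set.mem_singleton_iff]
    constructor
    · rintro ⟨s, i, rfl⟩
      rcases Int.even_or_odd s with hs|hs <;> rcases Int.even_or_odd i with hi|hi
      · exact Or.inl ((hmk s i 0 0).mpr ⟨int_mod2_zero hs, int_mod2_zero hi⟩)
      · exact Or.inr (Or.inl ((hmk s i 0 1).mpr ⟨int_mod2_zero hs, int_mod2_one hi⟩))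
      · exact Or.inr (Or.inr (Or.inl ((hmk s i 1 0).mpr ⟨int_mod2_one hs, int_mod2_zero hi⟩)))
      · exact Or.inr (Or.inr (Or.inr ((hmk s i 1 1).mpr ⟨int_mod2_one hs, int_mod2_one hi⟩)))
    · rintro (rfl|rfl|rfl|rfl)
      · exact ⟨0, 0, rfl⟩
      · exact ⟨0, 1, rfl⟩
      · exact ⟨1, 0, rfl⟩
      · exact ⟨1, 1, rfl⟩
  rw [hset]
  have d1 : ¬ ((0:ℤ) ≡ 0 [ZMOD 2] ∧ (0:ℤ) ≡ 1 [ZMOD 2]) := by decide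
  have d2 : ¬ ((0:ℤ) ≡ 1 [ZMOD 2] ∧ (0:ℤ) ≡ 0 [ZMOD 2]) := by decide
  have d3 : ¬ ((0:ℤ) ≡ 1 [ZMOD 2] ∧ (0:ℤ) ≡ 1 [ZMOD 2]) := by decide
  have d4 : ¬ ((0:ℤ) ≡ 1 [ZMOD 2] ∧ (1:ℤ) ≡ 0 [ZMOD 2]) := by decide
  have d5 : ¬ ((0:ℤ) ≡ 1 [ZMOD 2] ∧ (1:ℤ) ≡ 1 [ZMOD 2]) := by decide
  have d6 : ¬ ((1:ℤ) ≡ 1 [ZMOD 2] ∧ (0:ℤ) ≡ 1 [ZMOD 2]) := by decide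
  rw [Set.ncard_insert_of_notMem, Set.ncard_insert_of_notMem,
    Set.ncard_insert_of_notMem, Set.ncard_singleton]
  · intro hmem
    rw [Set.mem_singleton_iff, hmk] at hmem
    exact d6 hmem
  · intro hmem
    rcases hmem with hmem|hmem
    · rw [hmk] at hmem; exact d4 hmem
    · rw [Set.mem_singleton_iff, hmk] at hmem; exact d5 hmem
  · intro hmem
    rcases hmem with hmem|hmem
    · rw [hmk] at hmem; exact d1 hmem
    rcases hmem with hmem|hmem
    · rw [hmk] at hmem; exact d2 hmem
    · rw [Set.mem_singleton_iff, hmk] at hmem; exact d3 hmem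

end Main
end ZkDlProof

open ZkDl

theorem conj_class_reflections (l k : ℕ) (hl : 3 ≤ l) (hk : 4 ∣ k) :
    (∀ s i p j : ℤ,
      (IsConj (a l k ^ s * u l k ^ i * v l k) (a l k ^ p * u l k ^ j * v l k) ↔
        (s ≡ p [ZMOD 2] ∧ i ≡ j [ZMOD 2]))) ∧
    {C : ConjClasses (G l k) |
        ∃ s i : ℤ, C = ConjClasses.mk (a l k ^ s * u l k ^ i * v l k)}.ncard = 4 ∧
    (∀ s i : ℤ,
      {y : G l k | IsConj (a l k ^ s * u l k ^ i * v l k) y}.ncard = 2 ^ (l - 2) * k) := by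
  obtain ⟨t, rfl⟩ := hk
  rw [show 4*t = 2*(2*t) from by ring]
  have h4 : 2^l = 4*(2^(l-2)) := by
    conv_lhs => rw [show l = (l-2)+2 from by omega]
    rw [pow_add]; ring
  have h2 : 2^(l-1) = 2*(2^(l-2)) := by
    conv_lhs => rw [show l-1 = (l-2)+1 from by omega]
    rw [pow_succ]; ring
  have hbe : (2:ℕ) ∣ 2^(l-2) := dvd_pow_self 2 (by omega)
  refine ⟨ZkDlProof.main_iff h4 h2 hl hbe,
    ZkDlProof.main_classes h4 h2 hl hbe, ?_⟩
  intro s i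
  have := ZkDlProof.main_count (m := 2*t) h4 h2 hl hbe s i
  rw [this]
end

section
/- Every element of G is conjugate to its own inverse; that is, G is completely real (ambivalent). -/
open ZkDl

private lemma zpow_congr_aux {H : Type*} [Group H] {A : H} {n : ℤ} (hA : A ^ n = 1)
    {x y : ℤ} (h : n ∣ x - y) : A ^ x = A ^ y := by
  obtain ⟨c, hc⟩ := h
  have hx : x = y + n * c := by linarith
  rw [hx, zpow_add, zpow_mul, hA, one_zpow, mul_one]

/-- Abstract version: a group generated by `A, U, V` with the relations
`A^(8t)=1`, `U A U⁻¹ = A^(4t+1)`, `V A V⁻¹ = A^(4t-1)`, `V² = 1`, `V U V⁻¹ = U⁻¹`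
is ambivalent. -/
private lemma aux_completely_real {H : Type*} [Group H] (A U V : H) (t : ℤ)
    (hA : A ^ (8 * t) = 1)
    (hU : U * A * U⁻¹ = A ^ (4 * t + 1))
    (hV : V * A * V⁻¹ = A ^ (4 * t - 1))
    (hV2 : V * V = 1)
    (hVU : V * U * V⁻¹ = U⁻¹)
    (hcl : Subgroup.closure {A, U, V} = ⊤)
    (g : H) : IsConj g g⁻¹ := by
  have amod : ∀ x y : ℤ, 8 * t ∣ x - y → A ^ x = A ^ y := fun x y h => zpow_congr_aux hA h
  have hVi : V⁻¹ = V := inv_eq_of_mul_eq_one_right hV2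
  have cU : ∀ i : ℤ, U * A ^ i * U⁻¹ = A ^ ((4 * t + 1) * i) := by
    intro i
    calc U * A ^ i * U⁻¹ = (U * A * U⁻¹) ^ i := conj_zpow.symm
      _ = (A ^ (4 * t + 1)) ^ i := by rw [hU]
      _ = A ^ ((4 * t + 1) * i) := by rw [← zpow_mul]
  have cV : ∀ i : ℤ, V * A ^ i * V⁻¹ = A ^ ((4 * t - 1) * i) := by
    intro i
    calc V * A ^ i * V⁻¹ = (V * A * V⁻¹) ^ i := conj_zpow.symm
      _ = (A ^ (4 * t - 1)) ^ i := by rw [hV]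
      _ = A ^ ((4 * t - 1) * i) := by rw [← zpow_mul]
  have cUi : ∀ i : ℤ, U⁻¹ * A ^ i * U = A ^ ((4 * t + 1) * i) := by
    intro i
    have h1 : U * A ^ ((4 * t + 1) * i) * U⁻¹ = A ^ i := by
      rw [cU]
      exact amod _ _ ⟨(2 * t + 1) * i, by ring⟩
    rw [← h1]; group
  have cVU : ∀ j : ℤ, V * U ^ j * V⁻¹ = U ^ (-j) := by
    intro j
    calc V * U ^ j * V⁻¹ = (V * U * V⁻¹) ^ j := conj_zpow.symm
      _ = (U⁻¹) ^ j := by rw [hVU]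
      _ = U ^ (-j) := by rw [inv_zpow, zpow_neg]
  -- head-form rewriting lemmas
  have mUA : ∀ (i : ℤ) (x : H), U * (A ^ i * x) = A ^ ((4 * t + 1) * i) * (U * x) := by
    intro i x; rw [← cU i]; group
  have mUiA : ∀ (i : ℤ) (x : H), U⁻¹ * (A ^ i * x) = A ^ ((4 * t + 1) * i) * (U⁻¹ * x) := by
    intro i x; rw [← cUi i]; group
  have mVA : ∀ (i : ℤ) (x : H), V * (A ^ i * x) = A ^ ((4 * t - 1) * i) * (V * x) := by
    intro i x; rw [← cV i]; group
  have mVU : ∀ (j : ℤ) (x : H), V * (U ^ j * x) = U ^ (-j) * (V * x) := by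
    intro j x; rw [← cVU j]; group
  have mVUb : ∀ j : ℤ, V * U ^ j = U ^ (-j) * V := by
    intro j; rw [← cVU j]; group
  have mUU : ∀ j i : ℤ, U ^ j * A ^ i = A ^ (i + 4 * t * i * j) * U ^ j := by
    intro j
    induction j using Int.induction_on with
    | zero => intro i; simp
    | succ n ih =>
      intro i
      have h1 : U ^ ((n : ℤ) + 1) = U ^ (n : ℤ) * U := zpow_add_one U n
      have h2 : U ^ ((n : ℤ) + 1) * A ^ i = U ^ (n : ℤ) * (U * A ^ i * U⁻¹) * U := by
        rw [h1]; group
      rw [h2, cU, ih, mul_assoc, ← h1,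
        amod ((4 * t + 1) * i + 4 * t * ((4 * t + 1) * i) * n) (i + 4 * t * i * ((n : ℤ) + 1))
          ⟨2 * t * i * n, by ring⟩]
    | pred n ih =>
      intro i
      have h1 : U ^ (-(n : ℤ) - 1) = U ^ (-(n : ℤ)) * U⁻¹ := by
        rw [zpow_sub_one]
      have h2 : U ^ (-(n : ℤ) - 1) * A ^ i = U ^ (-(n : ℤ)) * (U⁻¹ * A ^ i * U) * U⁻¹ := by
        rw [h1]; group
      rw [h2, cUi, ih, mul_assoc, ← h1,
        amod ((4 * t + 1) * i + 4 * t * ((4 * t + 1) * i) * (-(n : ℤ)))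
          (i + 4 * t * i * (-(n : ℤ) - 1)) ⟨i - 2 * t * i * n, by ring⟩]
  have mUUA : ∀ (j i : ℤ) (x : H),
      U ^ j * (A ^ i * x) = A ^ (i + 4 * t * i * j) * (U ^ j * x) := by
    intro j i x; rw [← mul_assoc, mUU, mul_assoc]
  -- normal form
  have hmem : ∀ g : H, ∃ i j : ℤ, g = A ^ i * U ^ j ∨ g = A ^ i * (U ^ j * V) := by
    intro g
    have hg : g ∈ Subgroup.closure {A, U, V} := by rw [hcl]; trivial
    induction hg using Subgroup.closure_induction_left with
    | one => exact ⟨0, 0, Or.inl (by simp)⟩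
    | mul_left x hx y hy ih =>
      obtain ⟨i, j, h | h⟩ := ih <;>
        (simp only [Set.mem_insert_iff, Set.mem_singleton_iff] at hx;
         rcases hx with rfl | rfl | rfl)
      · exact ⟨1 + i, j, Or.inl (by rw [h, zpow_add, zpow_one] <;> simp only [mul_assoc])⟩
      · exact ⟨(4 * t + 1) * i, 1 + j, Or.inl (by
          rw [h, mUA, zpow_add, zpow_one] <;> simp only [mul_assoc])⟩
      · exact ⟨(4 * t - 1) * i, -j, Or.inr (by rw [h, mVA, mVUb])⟩
      · exact ⟨1 + i, j, Or.inr (by rw [h, zpow_add, zpow_one] <;> simp only [mul_assoc])⟩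
      · exact ⟨(4 * t + 1) * i, 1 + j, Or.inr (by
          rw [h, mUA, zpow_add, zpow_one] <;> simp only [mul_assoc])⟩
      · exact ⟨(4 * t - 1) * i, -j, Or.inl (by rw [h, mVA, mVU, hV2, mul_one])⟩
    | inv_mul_cancel x hx y hy ih =>
      obtain ⟨i, j, h | h⟩ := ih <;>
        (simp only [Set.mem_insert_iff, Set.mem_singleton_iff] at hx;
         rcases hx with rfl | rfl | rfl)
      · exact ⟨-1 + i, j, Or.inl (by
          rw [h, zpow_add, zpow_neg_one] <;> simp only [mul_assoc])⟩
      · exact ⟨(4 * t + 1) * i, -1 + j, Or.inl (by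
          rw [h, mUiA, zpow_add, zpow_neg_one] <;> simp only [mul_assoc])⟩
      · exact ⟨(4 * t - 1) * i, -j, Or.inr (by rw [h, hVi, mVA, mVUb])⟩
      · exact ⟨-1 + i, j, Or.inr (by
          rw [h, zpow_add, zpow_neg_one] <;> simp only [mul_assoc])⟩
      · exact ⟨(4 * t + 1) * i, -1 + j, Or.inr (by
          rw [h, mUiA, zpow_add, zpow_neg_one] <;> simp only [mul_assoc])⟩
      · exact ⟨(4 * t - 1) * i, -j, Or.inl (by rw [h, hVi, mVA, mVU, hV2, mul_one])⟩
  obtain ⟨i, j, hg | hg⟩ := hmem g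
  · rcases Int.even_or_odd j with ⟨s, rfl⟩ | ⟨s, rfl⟩
    · -- g = A^i U^(s+s), conjugate by U*V
      rw [isConj_iff]
      refine ⟨U * V, ?_⟩
      have key : (U * V) * g = g⁻¹ * (U * V) := by
        rw [hg, mul_inv_rev, ← zpow_neg, ← zpow_neg]
        calc (U * V) * (A ^ i * U ^ (s + s))
            = U * (V * (A ^ i * U ^ (s + s))) := by rw [mul_assoc]
          _ = U * (A ^ ((4 * t - 1) * i) * (U ^ (-(s + s)) * V)) := by rw [mVA, mVUb]
          _ = A ^ ((4 * t + 1) * ((4 * t - 1) * i)) * (U * (U ^ (-(s + s)) * V)) := by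
              rw [mUA]
          _ = A ^ ((4 * t + 1) * ((4 * t - 1) * i)) * (U ^ (-(s + s)) * (U * V)) := by
              rw [← mul_assoc U, ((Commute.refl U).zpow_right (-(s + s))).eq, mul_assoc]
          _ = A ^ (-i + 4 * t * (-i) * (-(s + s))) * (U ^ (-(s + s)) * (U * V)) := by
              rw [amod ((4 * t + 1) * ((4 * t - 1) * i)) (-i + 4 * t * (-i) * (-(s + s)))
                ⟨2 * t * i - i * s, by ring⟩]
          _ = U ^ (-(s + s)) * (A ^ (-i) * (U * V)) := (mUUA _ _ _).symm
          _ = U ^ (-(s + s)) * A ^ (-i) * (U * V) := by rw [mul_assoc]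
      rw [key, mul_inv_cancel_right]
    · -- g = A^i U^(2s+1), conjugate by V
      rw [isConj_iff]
      refine ⟨V, ?_⟩
      have key : V * g = g⁻¹ * V := by
        rw [hg, mul_inv_rev, ← zpow_neg, ← zpow_neg]
        calc V * (A ^ i * U ^ (2 * s + 1))
            = A ^ ((4 * t - 1) * i) * (U ^ (-(2 * s + 1)) * V) := by rw [mVA, mVUb]
          _ = A ^ (-i + 4 * t * (-i) * (-(2 * s + 1))) * (U ^ (-(2 * s + 1)) * V) := by
              rw [amod ((4 * t - 1) * i) (-i + 4 * t * (-i) * (-(2 * s + 1)))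
                ⟨-(i * s), by ring⟩]
          _ = U ^ (-(2 * s + 1)) * (A ^ (-i) * V) := (mUUA _ _ _).symm
          _ = U ^ (-(2 * s + 1)) * A ^ (-i) * V := by rw [mul_assoc]
      rw [key, mul_inv_cancel_right]
  · rcases Int.even_or_odd j with ⟨s, rfl⟩ | ⟨s, rfl⟩
    · -- g = A^i (U^(s+s) V), conjugate by A^(2ti)
      rw [isConj_iff]
      refine ⟨A ^ (2 * t * i), ?_⟩
      have key : A ^ (2 * t * i) * g = g⁻¹ * A ^ (2 * t * i) := by
        rw [hg, mul_inv_rev, mul_inv_rev, hVi, ← zpow_neg, ← zpow_neg]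
        have lhs : A ^ (2 * t * i) * (A ^ i * (U ^ (s + s) * V))
            = A ^ (2 * t * i + i) * (U ^ (s + s) * V) := by
          rw [← mul_assoc, ← zpow_add]
        rw [lhs]
        refine Eq.symm ?_
        calc V * U ^ (-(s + s)) * A ^ (-i) * A ^ (2 * t * i)
            = V * (U ^ (-(s + s)) * (A ^ (-i) * A ^ (2 * t * i))) := by
              simp only [mul_assoc]
          _ = V * (U ^ (-(s + s)) * A ^ (-i + 2 * t * i)) := by rw [← zpow_add]
          _ = V * (A ^ ((-i + 2 * t * i) + 4 * t * (-i + 2 * t * i) * (-(s + s)))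
                * U ^ (-(s + s))) := by rw [mUU]
          _ = A ^ ((4 * t - 1) * ((-i + 2 * t * i) + 4 * t * (-i + 2 * t * i) * (-(s + s))))
                * (U ^ (-(-(s + s))) * V) := by rw [mVA, mVUb]
          _ = A ^ (2 * t * i + i) * (U ^ (s + s) * V) := by
              rw [neg_neg,
                amod ((4 * t - 1) * ((-i + 2 * t * i) + 4 * t * (-i + 2 * t * i) * (-(s + s))))
                  (2 * t * i + i)
                  ⟨-(i - t * i - 6 * t * i * s + 8 * t ^ 2 * i * s + i * s), by ring⟩]
      rw [key, mul_inv_cancel_right]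
    · -- g = A^i (U^(2s+1) V) is an involution
      have hsq : g * g = 1 := by
        rw [hg]
        calc (A ^ i * (U ^ (2 * s + 1) * V)) * (A ^ i * (U ^ (2 * s + 1) * V))
            = A ^ i * (U ^ (2 * s + 1) * (V * (A ^ i * (U ^ (2 * s + 1) * V)))) := by
              simp only [mul_assoc]
          _ = A ^ i * (U ^ (2 * s + 1) * (A ^ ((4 * t - 1) * i)
                * (U ^ (-(2 * s + 1)) * (V * V)))) := by rw [mVA, mVU]
          _ = A ^ i * (U ^ (2 * s + 1) * (A ^ ((4 * t - 1) * i) * U ^ (-(2 * s + 1)))) := by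
              rw [hV2, mul_one]
          _ = A ^ i * (A ^ ((4 * t - 1) * i + 4 * t * ((4 * t - 1) * i) * (2 * s + 1))
                * (U ^ (2 * s + 1) * U ^ (-(2 * s + 1)))) := by rw [mUUA]
          _ = A ^ i * A ^ ((4 * t - 1) * i + 4 * t * ((4 * t - 1) * i) * (2 * s + 1)) := by
              rw [← zpow_add, add_neg_cancel, zpow_zero, mul_one]
          _ = A ^ (i + ((4 * t - 1) * i + 4 * t * ((4 * t - 1) * i) * (2 * s + 1))) := by
              rw [← zpow_add]
          _ = A ^ (0 : ℤ) := amod _ 0 ⟨4 * t * s * i + 2 * t * i - s * i, by ring⟩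
          _ = 1 := zpow_zero A
      have hginv : g⁻¹ = g := inv_eq_of_mul_eq_one_right hsq
      rw [hginv]

theorem completely_real (l k : ℕ) (hl : 3 ≤ l) (hk : 4 ∣ k) (g : G l k) :
    IsConj g g⁻¹ := by
  obtain ⟨m, rfl⟩ : ∃ m, l = m + 3 := ⟨l - 3, by omega⟩
  have hrel : ∀ r ∈ rels (m + 3) k, PresentedGroup.mk (rels (m + 3) k) r = 1 := fun r hr =>
    (QuotientGroup.eq_one_iff r).2 (Subgroup.subset_normalClosure hr)
  have hsub1 : m + 3 - 1 = m + 2 := by omega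
  -- the basic relations in G
  have ha : a (m + 3) k ^ ((2 : ℕ) ^ (m + 3)) = 1 := by
    have h := hrel _ (show FreeGroup.of 0 ^ 2 ^ (m + 3) ∈ rels (m + 3) k by
      simp [rels])
    rw [map_pow] at h
    exact h
  have hv2 : v (m + 3) k * v (m + 3) k = 1 := by
    have h := hrel _ (show FreeGroup.of 2 ^ 2 ∈ rels (m + 3) k by simp [rels])
    rw [map_pow, pow_two] at h
    exact h
  have hVi : (v (m + 3) k)⁻¹ = v (m + 3) k := inv_eq_of_mul_eq_one_right hv2
  have huA : u (m + 3) k * a (m + 3) k * (u (m + 3) k)⁻¹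
      = a (m + 3) k ^ (n₁ (m + 3)) := by
    have h := hrel _ (show FreeGroup.of 1 * FreeGroup.of 0 * (FreeGroup.of 1)⁻¹
        * (FreeGroup.of 0 ^ n₁ (m + 3))⁻¹ ∈ rels (m + 3) k by simp [rels])
    simp only [map_mul, map_inv, map_pow] at h
    exact mul_inv_eq_one.mp h
  have hvA : v (m + 3) k * a (m + 3) k * v (m + 3) k
      = a (m + 3) k ^ (n₂ (m + 3)) := by
    have h := hrel _ (show FreeGroup.of 2 * FreeGroup.of 0 * FreeGroup.of 2
        * (FreeGroup.of 0 ^ n₂ (m + 3))⁻¹ ∈ rels (m + 3) k by simp [rels])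
    simp only [map_mul, map_inv, map_pow] at h
    exact mul_inv_eq_one.mp h
  have hvuv : v (m + 3) k * u (m + 3) k * v (m + 3) k = (u (m + 3) k)⁻¹ := by
    have h := hrel _ (show FreeGroup.of 2 * FreeGroup.of 1 * FreeGroup.of 2
        * FreeGroup.of 1 ∈ rels (m + 3) k by simp [rels])
    simp only [map_mul] at h
    exact eq_inv_of_mul_eq_one_left h
  -- translate into the abstract form with t = 2^m
  have hA : a (m + 3) k ^ (8 * (2 : ℤ) ^ m) = 1 := by
    have hc : (8 * (2 : ℤ) ^ m) = (((2 : ℕ) ^ (m + 3) : ℕ) : ℤ) := by push_cast; ring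
    rw [hc, zpow_natCast]
    exact ha
  have hU : u (m + 3) k * a (m + 3) k * (u (m + 3) k)⁻¹
      = a (m + 3) k ^ (4 * (2 : ℤ) ^ m + 1) := by
    have hc : (4 * (2 : ℤ) ^ m + 1) = ((n₁ (m + 3) : ℕ) : ℤ) := by
      simp only [n₁, hsub1]
      push_cast
      ring
    rw [hc, zpow_natCast]
    exact huA
  have hV : v (m + 3) k * a (m + 3) k * (v (m + 3) k)⁻¹
      = a (m + 3) k ^ (4 * (2 : ℤ) ^ m - 1) := by
    have hc : (4 * (2 : ℤ) ^ m - 1) = ((n₂ (m + 3) : ℕ) : ℤ) := by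
      simp only [n₂, hsub1]
      rw [Nat.cast_sub Nat.one_le_two_pow]
      push_cast
      ring
    rw [hc, zpow_natCast, hVi]
    exact hvA
  have hVU : v (m + 3) k * u (m + 3) k * (v (m + 3) k)⁻¹ = (u (m + 3) k)⁻¹ := by
    rw [hVi]; exact hvuv
  have hcl : Subgroup.closure {a (m + 3) k, u (m + 3) k, v (m + 3) k} = ⊤ := by
    have hset : ({a (m + 3) k, u (m + 3) k, v (m + 3) k} : Set (G (m + 3) k))
        = Set.range (PresentedGroup.of : Fin 3 → G (m + 3) k) := by
      ext x
      simp only [Set.mem_insert_iff, Set.mem_singleton_iff, Set.mem_range]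
      constructor
      · rintro (rfl | rfl | rfl)
        exacts [⟨0, rfl⟩, ⟨1, rfl⟩, ⟨2, rfl⟩]
      · rintro ⟨y, rfl⟩
        fin_cases y
        · exact Or.inl rfl
        · exact Or.inr (Or.inl rfl)
        · exact Or.inr (Or.inr rfl)
    rw [hset, PresentedGroup.closure_range_of]
  exact aux_completely_real (a (m + 3) k) (u (m + 3) k) (v (m + 3) k) ((2 : ℤ) ^ m)
    hA hU hV hv2 hVU hcl g
end

section
/- For any element of the form a^s u^(2i) not in the center of G, its centralizer is ⟨a, u⟩ if s is even and ⟨a, u^2⟩ if s is odd; in either case the centralizer is a normal subgroup of G. -/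
namespace ZkDlModel

open DihedralGroup Multiplicative

/-- multiplication by `c` with `c * c = 1` as an automorphism of `Multiplicative (ZMod m)`. -/
def mulAutBy {m : ℕ} (c : ZMod m) (h : c * c = 1) :
    MulAut (Multiplicative (ZMod m)) :=
  AddEquiv.toMultiplicative
    { toFun := fun x => c * x
      invFun := fun x => c * x
      left_inv := fun x => by simp only; rw [← mul_assoc, h, one_mul]
      right_inv := fun x => by simp only; rw [← mul_assoc, h, one_mul]
      map_add' := fun x y => mul_add c x y }

@[simp] lemma mulAutBy_apply {m : ℕ} (c : ZMod m) (h : c * c = 1)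
    (x : Multiplicative (ZMod m)) :
    mulAutBy c h x = ofAdd (c * toAdd x) := rfl

lemma mulAutBy_mul {m : ℕ} (c c' : ZMod m) (h : c * c = 1) (h' : c' * c' = 1)
    (h'' : (c * c') * (c * c') = 1) :
    mulAutBy c h * mulAutBy c' h' = mulAutBy (c * c') h'' := by
  ext x
  simp [mul_assoc]

/-- `n₁`-ish multiplier depending on a parity bit. -/
def c₁ (l : ℕ) (b : ZMod 2) : ZMod (2 ^ l) :=
  if b = 0 then 1 else (ZkDl.n₁ l : ZMod (2 ^ l))

lemma zmod2_cases (b : ZMod 2) : b = 0 ∨ b = 1 := by revert b; decide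

lemma n₁_sq (l : ℕ) (hl : 3 ≤ l) :
    (ZkDl.n₁ l : ZMod (2 ^ l)) * (ZkDl.n₁ l : ZMod (2 ^ l)) = 1 := by
  obtain ⟨m, rfl⟩ : ∃ m, l = m + 3 := ⟨l - 3, by omega⟩
  have h : ZkDl.n₁ (m + 3) * ZkDl.n₁ (m + 3) = 2 ^ (m + 3) * (2 ^ (m + 1) + 1) + 1 := by
    show (2 ^ (m + 2) + 1) * (2 ^ (m + 2) + 1) = _
    ring
  rw [← Nat.cast_mul, h]
  have h3 : ((2 ^ (m + 3) : ℕ) : ZMod (2 ^ (m + 3))) = 0 := ZMod.natCast_self _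
  push_cast at h3 ⊢
  rw [h3, zero_mul, zero_add]

lemma n₂_cast (l : ℕ) (hl : 3 ≤ l) :
    (ZkDl.n₂ l : ZMod (2 ^ l)) = 2 ^ (l - 1) - 1 := by
  have h1 : 1 ≤ 2 ^ (l - 1) := Nat.one_le_two_pow
  show ((2 ^ (l - 1) - 1 : ℕ) : ZMod (2 ^ l)) = _
  push_cast [h1]
  ring

lemma n₂_sq (l : ℕ) (hl : 3 ≤ l) :
    (ZkDl.n₂ l : ZMod (2 ^ l)) * (ZkDl.n₂ l : ZMod (2 ^ l)) = 1 := by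
  obtain ⟨m, rfl⟩ : ∃ m, l = m + 3 := ⟨l - 3, by omega⟩
  rw [n₂_cast _ (by omega), show (m + 3 - 1) = m + 2 from by omega]
  have h3 : ((2 ^ (m + 3) : ℕ) : ZMod (2 ^ (m + 3))) = 0 := ZMod.natCast_self _
  push_cast at h3
  ring_nf
  rw [show (2:ZMod (2^(m+3)))^(m*2)*16 = 2^(m+3) * 2^(m+1) from by ring,
    show (2:ZMod (2^(m+3)))^m*8 = 2^(m+3) from by ring, h3]
  ring

section Phi

variable (l k : ℕ)

lemma two_dvd_k (hk : 4 ∣ k) : 2 ∣ k := dvd_trans ⟨2, rfl⟩ hk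

/-- parity map -/
def π (hk : 4 ∣ k) : ZMod k →+* ZMod 2 := ZMod.castHom (two_dvd_k k hk) (ZMod 2)

lemma c₁_sq (hl : 3 ≤ l) (b : ZMod 2) : c₁ l b * c₁ l b = 1 := by
  unfold c₁
  rcases zmod2_cases b with rfl | rfl
  · simp
  · simpa using n₁_sq l hl

lemma c₁_add (hl : 3 ≤ l) (b b' : ZMod 2) : c₁ l (b + b') = c₁ l b * c₁ l b' := by
  rcases zmod2_cases b with rfl | rfl <;> rcases zmod2_cases b' with rfl | rfl <;>
    simp [c₁, n₁_sq l hl, show (1 + 1 : ZMod 2) = 0 from by decide]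

lemma c₁_sub (hl : 3 ≤ l) (b b' : ZMod 2) : c₁ l (b - b') = c₁ l b * c₁ l b' := by
  rw [CharTwo.sub_eq_add, c₁_add l hl]

/-- the multiplier associated to a dihedral group element -/
def mult (hk : 4 ∣ k) : DihedralGroup k → ZMod (2 ^ l)
  | .r j => c₁ l (π k hk j)
  | .sr j => (ZkDl.n₂ l : ZMod (2 ^ l)) * c₁ l (π k hk j)

@[simp] lemma mult_r (hk : 4 ∣ k) (j : ZMod k) : mult l k hk (.r j) = c₁ l (π k hk j) := rfl
@[simp] lemma mult_sr (hk : 4 ∣ k) (j : ZMod k) :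
    mult l k hk (.sr j) = (ZkDl.n₂ l : ZMod (2 ^ l)) * c₁ l (π k hk j) := rfl

lemma mult_sq (hl : 3 ≤ l) (hk : 4 ∣ k) (d : DihedralGroup k) :
    mult l k hk d * mult l k hk d = 1 := by
  cases d with
  | r j => exact c₁_sq l hl _
  | sr j =>
    have h1 := n₂_sq l hl
    have h2 := c₁_sq l hl (π k hk j)
    calc (ZkDl.n₂ l : ZMod (2^l)) * c₁ l (π k hk j) *
        ((ZkDl.n₂ l : ZMod (2^l)) * c₁ l (π k hk j))
        = ((ZkDl.n₂ l : ZMod (2^l)) * (ZkDl.n₂ l : ZMod (2^l))) *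
          (c₁ l (π k hk j) * c₁ l (π k hk j)) := by ring
      _ = 1 := by rw [h1, h2, one_mul]

lemma mult_mul (hl : 3 ≤ l) (hk : 4 ∣ k) (d d' : DihedralGroup k) :
    mult l k hk (d * d') = mult l k hk d * mult l k hk d' := by
  have h1 := n₂_sq l hl
  cases d with
  | r i => cases d' with
    | r j => show c₁ l (π k hk (i + j)) = _; rw [map_add, c₁_add l hl]; simp only [mult_r, mult_sr]; try ring
    | sr j => show _ * c₁ l (π k hk (j - i)) = _; rw [map_sub, c₁_sub l hl]; simp only [mult_r, mult_sr]; try ring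
  | sr i => cases d' with
    | r j => show _ * c₁ l (π k hk (i + j)) = _; rw [map_add, c₁_add l hl]; simp only [mult_r, mult_sr]; try ring
    | sr j =>
      show c₁ l (π k hk (j - i)) = _
      rw [map_sub, c₁_sub l hl]
      calc c₁ l (π k hk j) * c₁ l (π k hk i)
          = ((ZkDl.n₂ l : ZMod (2^l)) * (ZkDl.n₂ l : ZMod (2^l))) *
            (c₁ l (π k hk j) * c₁ l (π k hk i)) := by rw [h1, one_mul]
        _ = _ := by simp only [mult_r, mult_sr]; ring

/-- the action of the dihedral group on `Multiplicative (ZMod (2^l))` -/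
def phi (hl : 3 ≤ l) (hk : 4 ∣ k) :
    DihedralGroup k →* MulAut (Multiplicative (ZMod (2 ^ l))) where
  toFun d := mulAutBy (mult l k hk d) (mult_sq l k hl hk d)
  map_one' := by
    ext x
    have h : mult l k hk 1 = 1 := by
      rw [DihedralGroup.one_def]
      show c₁ l (π k hk 0) = 1
      rw [map_zero]; rfl
    simp [h]
  map_mul' d d' := by
    ext x
    simp [mult_mul l k hl hk, mul_assoc]

@[simp] lemma phi_apply (hl : 3 ≤ l) (hk : 4 ∣ k) (d : DihedralGroup k)
    (x : Multiplicative (ZMod (2 ^ l))) :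
    phi l k hl hk d x = Multiplicative.ofAdd (mult l k hk d * Multiplicative.toAdd x) := rfl

/-- the model group -/
abbrev H (hl : 3 ≤ l) (hk : 4 ∣ k) :=
  SemidirectProduct (Multiplicative (ZMod (2 ^ l))) (DihedralGroup k) (phi l k hl hk)

end Phi

end ZkDlModel

namespace ZkDlG

open ZkDl Subgroup

variable (l k : ℕ)

lemma rel_one {r : FreeGroup (Fin 3)} (hr : r ∈ rels l k) :
    PresentedGroup.mk (rels l k) r = 1 :=
  (QuotientGroup.eq_one_iff _).2 (Subgroup.subset_normalClosure hr)

lemma rel_a : a l k ^ 2 ^ l = 1 := by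
  have h := rel_one l k (show FreeGroup.of 0 ^ 2 ^ l ∈ rels l k by
    simp [rels, Set.mem_insert_iff])
  simpa [a, PresentedGroup.of, map_pow] using h

lemma rel_u : u l k ^ k = 1 := by
  have h := rel_one l k (show FreeGroup.of 1 ^ k ∈ rels l k by
    simp [rels, Set.mem_insert_iff])
  simpa [u, PresentedGroup.of, map_pow] using h

lemma rel_v : v l k ^ 2 = 1 := by
  have h := rel_one l k (show FreeGroup.of 2 ^ 2 ∈ rels l k by
    simp [rels, Set.mem_insert_iff])
  simpa [v, PresentedGroup.of, map_pow] using h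

lemma rel_ua : u l k * a l k * (u l k)⁻¹ = a l k ^ n₁ l := by
  have h := rel_one l k (show FreeGroup.of 1 * FreeGroup.of 0 * (FreeGroup.of 1)⁻¹ *
      (FreeGroup.of 0 ^ n₁ l)⁻¹ ∈ rels l k by simp [rels, Set.mem_insert_iff])
  rw [map_mul, map_mul, map_mul, map_inv, map_inv, map_pow, mul_inv_eq_one] at h
  exact h

lemma rel_va : v l k * a l k * v l k = a l k ^ n₂ l := by
  have h := rel_one l k (show FreeGroup.of 2 * FreeGroup.of 0 * FreeGroup.of 2 *
      (FreeGroup.of 0 ^ n₂ l)⁻¹ ∈ rels l k by simp [rels, Set.mem_insert_iff])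
  rw [map_mul, map_mul, map_mul, map_inv, map_pow, mul_inv_eq_one] at h
  exact h

lemma rel_vu : v l k * u l k * v l k = (u l k)⁻¹ := by
  have h := rel_one l k (show FreeGroup.of 2 * FreeGroup.of 1 * FreeGroup.of 2 *
      FreeGroup.of 1 ∈ rels l k by simp [rels, Set.mem_insert_iff])
  rw [map_mul, map_mul, map_mul] at h
  exact (mul_eq_one_iff_eq_inv.mp h)

lemma v_inv : (v l k)⁻¹ = v l k := by
  have h := rel_v l k
  rw [pow_two] at h
  exact inv_eq_of_mul_eq_one_right h

lemma a_zpow_natPow : a l k ^ ((2 ^ l : ℕ) : ℤ) = 1 := by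
  rw [zpow_natCast, rel_a]

lemma u_zpow_natPow : u l k ^ ((k : ℕ) : ℤ) = 1 := by
  rw [zpow_natCast, rel_u]

lemma apow_congr {z₁ z₂ : ℤ} (h : (z₁ : ZMod (2 ^ l)) = (z₂ : ZMod (2 ^ l))) :
    a l k ^ z₁ = a l k ^ z₂ := by
  obtain ⟨t, ht⟩ := (ZMod.intCast_eq_intCast_iff _ _ _).1 h |>.dvd
  have hz : z₁ = z₂ + (2 ^ l : ℕ) * (-t) := by push_cast at ht ⊢; linarith
  rw [hz, zpow_add, zpow_mul, a_zpow_natPow, one_zpow, mul_one]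

lemma upow_congr {z₁ z₂ : ℤ} (h : (z₁ : ZMod k) = (z₂ : ZMod k)) :
    u l k ^ z₁ = u l k ^ z₂ := by
  obtain ⟨t, ht⟩ := (ZMod.intCast_eq_intCast_iff _ _ _).1 h |>.dvd
  have hz : z₁ = z₂ + (k : ℕ) * (-t) := by push_cast at ht ⊢; linarith
  rw [hz, zpow_add, zpow_mul, u_zpow_natPow, one_zpow, mul_one]

lemma conj_u_a (z : ℤ) : u l k * a l k ^ z * (u l k)⁻¹ = a l k ^ ((n₁ l : ℤ) * z) := by
  have h : u l k * a l k ^ z * (u l k)⁻¹ = (u l k * a l k * (u l k)⁻¹) ^ z := by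
    have hm := map_zpow (MulAut.conj (u l k)) (a l k) z
    simpa [MulAut.conj_apply] using hm
  rw [h, rel_ua, ← zpow_natCast, ← zpow_mul]

lemma conj_v_a (z : ℤ) : v l k * a l k ^ z * (v l k)⁻¹ = a l k ^ ((n₂ l : ℤ) * z) := by
  have h : v l k * a l k ^ z * (v l k)⁻¹ = (v l k * a l k * (v l k)⁻¹) ^ z := by
    have hm := map_zpow (MulAut.conj (v l k)) (a l k) z
    simpa [MulAut.conj_apply] using hm
  rw [h, v_inv, rel_va, ← zpow_natCast, ← zpow_mul]

lemma conj_v_u (z : ℤ) : v l k * u l k ^ z * (v l k)⁻¹ = u l k ^ (-z) := by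
  have h : v l k * u l k ^ z * (v l k)⁻¹ = (v l k * u l k * (v l k)⁻¹) ^ z := by
    have hm := map_zpow (MulAut.conj (v l k)) (u l k) z
    simpa [MulAut.conj_apply] using hm
  rw [h, v_inv, rel_vu, inv_zpow, ← zpow_neg]

lemma u_zpow_v (z : ℤ) : u l k ^ z * v l k = v l k * u l k ^ (-z) := by
  have h := conj_v_u l k (-z)
  rw [v_inv] at h
  have := congrArg (fun w => v l k * w * v l k) h
  calc u l k ^ z * v l k = v l k * (v l k * u l k ^ z * v l k) := by
        rw [← mul_assoc, ← mul_assoc, ← pow_two, rel_v, one_mul]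
    _ = v l k * u l k ^ (-z) := by
        rw [show v l k * u l k ^ z * v l k = u l k ^ (-z) from by
          have h2 := conj_v_u l k z; rwa [v_inv] at h2]

lemma comm_u2_a (hl : 3 ≤ l) : Commute (u l k ^ (2 : ℤ)) (a l k) := by
  have h : u l k ^ (2:ℤ) * a l k * (u l k ^ (2:ℤ))⁻¹ = a l k := by
    have e1 : u l k ^ (2:ℤ) = u l k * u l k := by rw [zpow_two]
    rw [e1, mul_inv_rev]
    calc u l k * u l k * a l k * ((u l k)⁻¹ * (u l k)⁻¹)
        = u l k * (u l k * (a l k ^ (1:ℤ)) * (u l k)⁻¹) * (u l k)⁻¹ := by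
          group
      _ = u l k * a l k ^ ((n₁ l : ℤ) * 1) * (u l k)⁻¹ := by rw [conj_u_a]
      _ = a l k ^ ((n₁ l : ℤ) * ((n₁ l : ℤ) * 1)) := by rw [conj_u_a]
      _ = a l k ^ (1:ℤ) := by
          apply apow_congr
          push_cast
          rw [mul_one]
          exact ZkDlModel.n₁_sq l hl
      _ = a l k := zpow_one _
  have h2 : u l k ^ (2:ℤ) * a l k = a l k * u l k ^ (2:ℤ) := by
    conv_rhs => rw [← h]
    group
  exact h2

open ZkDlModel SemidirectProduct DihedralGroup Multiplicative

lemma conj_u2q_a (hl : 3 ≤ l) (q z : ℤ) :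
    u l k ^ (2 * q) * a l k ^ z * (u l k ^ (2 * q))⁻¹ = a l k ^ z := by
  have hcomm : Commute (u l k ^ (2 * q)) (a l k ^ z) := by
    have h1 : u l k ^ (2 * q) = (u l k ^ (2 : ℤ)) ^ q := by rw [← zpow_mul]
    rw [h1]
    exact ((comm_u2_a l k hl).zpow_left q).zpow_right z
  rw [hcomm.eq, mul_inv_cancel_right]

lemma conj_upow_a (hl : 3 ≤ l) (m z : ℤ) :
    u l k ^ m * a l k ^ z * (u l k ^ m)⁻¹ =
      a l k ^ ((if Even m then 1 else (n₁ l : ℤ)) * z) := by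
  rcases Int.even_or_odd m with ⟨q, hq⟩ | ⟨q, hq⟩
  · rw [if_pos ⟨q, hq⟩, one_mul]
    have h1 : m = 2 * q := by omega
    rw [h1]
    exact conj_u2q_a l k hl q z
  · rw [if_neg (by simp [Int.even_iff, Int.odd_iff.mp ⟨q, hq⟩])]
    have h1 : u l k ^ m = u l k ^ (2 * q) * u l k := by
      rw [hq, ← zpow_add_one]
    rw [h1]
    calc u l k ^ (2*q) * u l k * a l k ^ z * (u l k ^ (2*q) * u l k)⁻¹
        = u l k ^ (2*q) * (u l k * a l k ^ z * (u l k)⁻¹) * (u l k ^ (2*q))⁻¹ := by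
          group
      _ = u l k ^ (2*q) * a l k ^ ((n₁ l : ℤ) * z) * (u l k ^ (2*q))⁻¹ := by
          rw [conj_u_a]
      _ = a l k ^ ((n₁ l : ℤ) * z) := conj_u2q_a l k hl q _

def apow (y : ZMod (2 ^ l)) : G l k := a l k ^ (ZMod.cast y : ℤ)
def upowZ (y : ZMod k) : G l k := u l k ^ (ZMod.cast y : ℤ)

lemma apow_intCast (z : ℤ) : apow l k ((z : ZMod (2 ^ l))) = a l k ^ z := by
  unfold apow
  exact apow_congr l k (by rw [ZMod.intCast_zmod_cast])

lemma upowZ_intCast (z : ℤ) : upowZ l k ((z : ZMod k)) = u l k ^ z := by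
  unfold upowZ
  exact upow_congr l k (by rw [ZMod.intCast_zmod_cast])

lemma apow_add (x y : ZMod (2 ^ l)) :
    apow l k (x + y) = apow l k x * apow l k y := by
  unfold apow
  rw [← zpow_add]
  exact apow_congr l k (by push_cast [ZMod.intCast_zmod_cast]; ring)

lemma upowZ_add (x y : ZMod k) :
    upowZ l k (x + y) = upowZ l k x * upowZ l k y := by
  unfold upowZ
  rw [← zpow_add]
  exact upow_congr l k (by push_cast [ZMod.intCast_zmod_cast]; ring)

def f₁ : Multiplicative (ZMod (2 ^ l)) →* G l k where
  toFun x := apow l k (toAdd x)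
  map_one' := by
    have : ((0 : ℤ) : ZMod (2 ^ l)) = 0 := by push_cast; rfl
    show apow l k 0 = 1
    rw [← this, apow_intCast, zpow_zero]
  map_mul' x y := apow_add l k (toAdd x) (toAdd y)

@[simp] lemma f₁_apply (x : Multiplicative (ZMod (2 ^ l))) :
    f₁ l k x = apow l k (toAdd x) := rfl

def f₂fun : DihedralGroup k → G l k
  | .r j => upowZ l k j
  | .sr j => v l k * upowZ l k j

@[simp] lemma f₂fun_r (j : ZMod k) : f₂fun l k (.r j) = upowZ l k j := rfl
@[simp] lemma f₂fun_sr (j : ZMod k) : f₂fun l k (.sr j) = v l k * upowZ l k j := rfl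

lemma upowZ_zero : upowZ l k 0 = 1 := by
  have : ((0 : ℤ) : ZMod k) = 0 := by push_cast; rfl
  rw [← this, upowZ_intCast, zpow_zero]

lemma u_zpow_v' (z : ℤ) : u l k ^ z * v l k = v l k * u l k ^ (-z) := u_zpow_v l k z

lemma upowZ_sub_eq (i j : ZMod k) :
    upowZ l k (j - i) = u l k ^ (-(ZMod.cast i : ℤ) + (ZMod.cast j : ℤ)) := by
  unfold upowZ
  exact upow_congr l k (by push_cast [ZMod.intCast_zmod_cast]; ring)

def f₂ : DihedralGroup k →* G l k where
  toFun := f₂fun l k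
  map_one' := by
    rw [DihedralGroup.one_def]
    show upowZ l k 0 = 1
    exact upowZ_zero l k
  map_mul' d d' := by
    cases d with
    | r i => cases d' with
      | r j => show upowZ l k (i + j) = upowZ l k i * upowZ l k j; exact upowZ_add l k i j
      | sr j =>
        show v l k * upowZ l k (j - i) = upowZ l k i * (v l k * upowZ l k j)
        rw [upowZ_sub_eq]
        unfold upowZ
        rw [zpow_add, ← mul_assoc, ← mul_assoc, ← u_zpow_v']
    | sr i => cases d' with
      | r j =>
        show v l k * upowZ l k (i + j) = v l k * upowZ l k i * upowZ l k j
        rw [upowZ_add, mul_assoc]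
      | sr j =>
        show upowZ l k (j - i) = v l k * upowZ l k i * (v l k * upowZ l k j)
        rw [upowZ_sub_eq]
        unfold upowZ
        calc u l k ^ (-(ZMod.cast i : ℤ) + (ZMod.cast j : ℤ))
            = u l k ^ (-(ZMod.cast i : ℤ)) * u l k ^ (ZMod.cast j : ℤ) := zpow_add _ _ _
          _ = (v l k * v l k) * (u l k ^ (-(ZMod.cast i : ℤ)) * u l k ^ (ZMod.cast j : ℤ)) := by
              have hv : v l k * v l k = 1 := by rw [← pow_two]; exact rel_v l k
              rw [hv, one_mul]
          _ = v l k * (v l k * u l k ^ (-(ZMod.cast i : ℤ))) * u l k ^ (ZMod.cast j : ℤ) := by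
              group
          _ = v l k * (u l k ^ (ZMod.cast i : ℤ) * v l k) * u l k ^ (ZMod.cast j : ℤ) := by
              rw [← u_zpow_v']
          _ = v l k * u l k ^ (ZMod.cast i : ℤ) * (v l k * u l k ^ (ZMod.cast j : ℤ)) := by
              group

@[simp] lemma f₂_r (j : ZMod k) : f₂ l k (.r j) = upowZ l k j := rfl
@[simp] lemma f₂_sr (j : ZMod k) : f₂ l k (.sr j) = v l k * upowZ l k j := rfl

lemma c₁_eq_if (hk : 4 ∣ k) (j : ZMod k) :
    c₁ l (π k hk j) =
      if Even (ZMod.cast j : ℤ) then 1 else ((n₁ l : ZMod (2 ^ l))) := by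
  have hπ : π k hk j = (((ZMod.cast j : ℤ)) : ZMod 2) := by
    rw [π, ZMod.castHom_apply, ZMod.intCast_cast]
  by_cases he : Even (ZMod.cast j : ℤ)
  · rw [if_pos he]
    have h0 : π k hk j = 0 := by
      rw [hπ, ZMod.intCast_zmod_eq_zero_iff_dvd]
      exact he.two_dvd
    rw [h0]; rfl
  · rw [if_neg he]
    have h0 : π k hk j ≠ 0 := by
      rw [hπ, Ne, ZMod.intCast_zmod_eq_zero_iff_dvd]
      intro hd
      obtain ⟨c, hc⟩ := hd
      exact he ⟨c, by omega⟩
    rcases zmod2_cases (π k hk j) with h | h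
    · exact absurd h h0
    · rw [h]; simp [c₁]

lemma apow_mul_cast (c y : ZMod (2 ^ l)) :
    apow l k (c * y) = a l k ^ ((ZMod.cast c : ℤ) * (ZMod.cast y : ℤ)) := by
  unfold apow
  exact apow_congr l k (by push_cast [ZMod.intCast_zmod_cast]; ring)

lemma compat (hl : 3 ≤ l) (hk : 4 ∣ k) : ∀ d : DihedralGroup k,
    (f₁ l k).comp ((phi l k hl hk d).toMonoidHom) =
      (MulAut.conj (f₂ l k d)).toMonoidHom.comp (f₁ l k) := by
  intro d
  refine MonoidHom.ext fun x => ?_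
  simp only [MonoidHom.comp_apply, MulEquiv.coe_toMonoidHom, phi_apply, MulAut.conj_apply,
    f₁_apply, toAdd_ofAdd]
  cases d with
  | r j =>
    rw [mult_r, apow_mul_cast, f₂_r]
    show _ = u l k ^ (ZMod.cast j : ℤ) * apow l k (toAdd x) * (u l k ^ (ZMod.cast j : ℤ))⁻¹
    unfold apow
    rw [conj_upow_a l k hl]
    apply apow_congr
    rw [c₁_eq_if l k hk]
    split_ifs with he
    · push_cast [ZMod.intCast_zmod_cast]; ring
    · push_cast [ZMod.intCast_zmod_cast]; ring
  | sr j =>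
    rw [mult_sr, apow_mul_cast, f₂_sr]
    show _ = v l k * upowZ l k j * apow l k (toAdd x) * (v l k * upowZ l k j)⁻¹
    unfold apow upowZ
    calc a l k ^ ((ZMod.cast ((ZkDl.n₂ l : ZMod (2^l)) * c₁ l (π k hk j)) : ℤ) *
            (ZMod.cast (toAdd x) : ℤ))
        = a l k ^ ((n₂ l : ℤ) * ((if Even (ZMod.cast j : ℤ) then 1 else (n₁ l : ℤ)) *
            (ZMod.cast (toAdd x) : ℤ))) := by
          apply apow_congr
          rw [c₁_eq_if l k hk]
          split_ifs with he
          · push_cast [ZMod.intCast_zmod_cast]; ring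
          · push_cast [ZMod.intCast_zmod_cast]; ring
      _ = v l k * (u l k ^ (ZMod.cast j : ℤ) * a l k ^ (ZMod.cast (toAdd x) : ℤ) *
            (u l k ^ (ZMod.cast j : ℤ))⁻¹) * (v l k)⁻¹ := by
          rw [conj_upow_a l k hl, conj_v_a]
      _ = v l k * u l k ^ (ZMod.cast j : ℤ) * a l k ^ (ZMod.cast (toAdd x) : ℤ) *
            (v l k * u l k ^ (ZMod.cast j : ℤ))⁻¹ := by group

def fgen (hl : 3 ≤ l) (hk : 4 ∣ k) : Fin 3 → H l k hl hk :=
  ![SemidirectProduct.inl (ofAdd 1), SemidirectProduct.inr (.r 1), SemidirectProduct.inr (.sr 0)]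

lemma inl_ofAdd_one_pow (hl : 3 ≤ l) (hk : 4 ∣ k) (n : ℕ) :
    (SemidirectProduct.inl (ofAdd (1 : ZMod (2^l))) : H l k hl hk) ^ n =
      SemidirectProduct.inl (ofAdd ((n : ZMod (2^l)))) := by
  rw [← map_pow, ← ofAdd_nsmul, nsmul_eq_mul, mul_one]

lemma relsHold (hl : 3 ≤ l) (hk : 4 ∣ k) :
    ∀ r ∈ rels l k, FreeGroup.lift (fgen l k hl hk) r = 1 := by
  intro r hr
  have h0 : FreeGroup.lift (fgen l k hl hk) (FreeGroup.of 0) =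
      SemidirectProduct.inl (ofAdd 1) := by simp [fgen]
  have h1 : FreeGroup.lift (fgen l k hl hk) (FreeGroup.of 1) =
      SemidirectProduct.inr (.r 1) := by simp [fgen]
  have h2 : FreeGroup.lift (fgen l k hl hk) (FreeGroup.of 2) =
      SemidirectProduct.inr (.sr 0) := by simp [fgen]
  simp only [rels, Set.mem_insert_iff, Set.mem_singleton_iff] at hr
  rcases hr with rfl | rfl | rfl | rfl | rfl | rfl
  · rw [map_pow, h0, inl_ofAdd_one_pow, ZMod.natCast_self]
    simp
  · rw [map_pow, h1, ← map_pow, r_one_pow, ZMod.natCast_self, ← one_def, map_one]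
  · rw [map_pow, h2, ← map_pow, pow_two, sr_mul_self, map_one]
  · rw [map_mul, map_mul, map_mul, map_inv, map_inv, map_pow, h0, h1]
    have hconj : (SemidirectProduct.inr (.r 1) : H l k hl hk) *
        SemidirectProduct.inl (ofAdd 1) * (SemidirectProduct.inr (.r 1))⁻¹ =
        SemidirectProduct.inl (phi l k hl hk (.r 1) (ofAdd 1)) := by
      rw [← map_inv]
      exact (inl_aut _ _).symm
    rw [hconj, inl_ofAdd_one_pow]
    have hval : phi l k hl hk (.r 1) (ofAdd 1) = ofAdd ((n₁ l : ZMod (2^l))) := by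
      rw [phi_apply, mult_r, toAdd_ofAdd, mul_one, map_one]
      show ofAdd (c₁ l 1) = _
      simp [c₁]
    rw [hval]
    simp
  · rw [map_mul, map_mul, map_mul, map_inv, map_pow, h0, h2]
    have hsr0 : (DihedralGroup.sr 0 : DihedralGroup k)⁻¹ = .sr 0 :=
      inv_eq_of_mul_eq_one_right (sr_mul_self 0)
    have hconj : (SemidirectProduct.inr (.sr 0) : H l k hl hk) *
        SemidirectProduct.inl (ofAdd 1) * SemidirectProduct.inr (.sr 0) =
        SemidirectProduct.inl (phi l k hl hk (.sr 0) (ofAdd 1)) := by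
      have hc := inl_aut (φ := phi l k hl hk) (DihedralGroup.sr 0) (ofAdd 1)
      rw [hsr0] at hc
      exact hc.symm
    rw [hconj, inl_ofAdd_one_pow]
    have hval : phi l k hl hk (.sr 0) (ofAdd 1) = ofAdd ((n₂ l : ZMod (2^l))) := by
      rw [phi_apply, mult_sr, toAdd_ofAdd, mul_one, map_zero]
      show ofAdd ((n₂ l : ZMod (2^l)) * c₁ l 0) = _
      simp [c₁]
    rw [hval]
    simp
  · rw [map_mul, map_mul, map_mul, h1, h2, ← map_mul, ← map_mul, ← map_mul]
    have hd : (DihedralGroup.sr 0 * DihedralGroup.r 1 * DihedralGroup.sr 0 *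
        DihedralGroup.r 1 : DihedralGroup k) = 1 := by
      rw [sr_mul_r, zero_add, sr_mul_sr, r_mul_r,
        show (0 : ZMod k) - 1 + 1 = 0 from by ring]
      rfl
    rw [hd, map_one]

def fGH (hl : 3 ≤ l) (hk : 4 ∣ k) : G l k →* H l k hl hk :=
  PresentedGroup.toGroup (relsHold l k hl hk)

@[simp] lemma fGH_a (hl : 3 ≤ l) (hk : 4 ∣ k) :
    fGH l k hl hk (a l k) = SemidirectProduct.inl (ofAdd 1) := by
  show fGH l k hl hk (PresentedGroup.of 0) = _
  rw [fGH, PresentedGroup.toGroup.of]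
  simp [fgen]

@[simp] lemma fGH_u (hl : 3 ≤ l) (hk : 4 ∣ k) :
    fGH l k hl hk (u l k) = SemidirectProduct.inr (.r 1) := by
  show fGH l k hl hk (PresentedGroup.of 1) = _
  rw [fGH, PresentedGroup.toGroup.of]
  simp [fgen]

@[simp] lemma fGH_v (hl : 3 ≤ l) (hk : 4 ∣ k) :
    fGH l k hl hk (v l k) = SemidirectProduct.inr (.sr 0) := by
  show fGH l k hl hk (PresentedGroup.of 2) = _
  rw [fGH, PresentedGroup.toGroup.of]
  simp [fgen]

def gHG (hl : 3 ≤ l) (hk : 4 ∣ k) : H l k hl hk →* G l k :=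
  SemidirectProduct.lift (f₁ l k) (f₂ l k) (compat l k hl hk)

lemma r_inv (x : ZMod k) : (DihedralGroup.r x : DihedralGroup k)⁻¹ = .r (-x) :=
  inv_eq_of_mul_eq_one_right (by rw [r_mul_r, add_neg_cancel, ← one_def])

lemma r_one_zpow (z : ℤ) : (DihedralGroup.r 1 : DihedralGroup k) ^ z = .r ((z : ZMod k)) := by
  cases z with
  | ofNat n =>
    rw [Int.ofNat_eq_coe, zpow_natCast, r_one_pow]
    try norm_cast
  | negSucc n =>
    rw [zpow_negSucc, r_one_pow, r_inv]
    congr 1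
    rw [Int.cast_negSucc]
    try push_cast
    try ring

lemma apow_one_eq : apow l k 1 = a l k := by
  rw [show (1 : ZMod (2 ^ l)) = ((1 : ℤ) : ZMod (2 ^ l)) from by push_cast; rfl,
    apow_intCast, zpow_one]

lemma upowZ_one_eq : upowZ l k 1 = u l k := by
  rw [show (1 : ZMod k) = ((1 : ℤ) : ZMod k) from by push_cast; rfl,
    upowZ_intCast, zpow_one]

lemma gHG_comp_fGH (hl : 3 ≤ l) (hk : 4 ∣ k) :
    (gHG l k hl hk).comp (fGH l k hl hk) = MonoidHom.id (G l k) := by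
  refine PresentedGroup.ext fun x => ?_
  fin_cases x
  · show gHG l k hl hk (fGH l k hl hk (a l k)) = _
    rw [fGH_a, gHG, SemidirectProduct.lift_inl]
    show apow l k 1 = _
    rw [apow_one_eq]; rfl
  · show gHG l k hl hk (fGH l k hl hk (u l k)) = _
    rw [fGH_u, gHG, SemidirectProduct.lift_inr, f₂_r, upowZ_one_eq]; rfl
  · show gHG l k hl hk (fGH l k hl hk (v l k)) = _
    rw [fGH_v, gHG, SemidirectProduct.lift_inr, f₂_sr, upowZ_zero, mul_one]; rfl

lemma fGH_f₁ (hl : 3 ≤ l) (hk : 4 ∣ k) (x : Multiplicative (ZMod (2 ^ l))) :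
    fGH l k hl hk (f₁ l k x) = SemidirectProduct.inl x := by
  rw [f₁_apply]
  unfold apow
  rw [map_zpow, fGH_a, ← map_zpow, ← ofAdd_zsmul, zsmul_one, ZMod.intCast_zmod_cast,
    ofAdd_toAdd]

lemma fGH_f₂ (hl : 3 ≤ l) (hk : 4 ∣ k) (d : DihedralGroup k) :
    fGH l k hl hk (f₂ l k d) = SemidirectProduct.inr d := by
  cases d with
  | r j =>
    rw [f₂_r]
    unfold upowZ
    rw [map_zpow, fGH_u, ← map_zpow, r_one_zpow, ZMod.intCast_zmod_cast]
  | sr j =>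
    rw [f₂_sr, map_mul, fGH_v]
    have : fGH l k hl hk (upowZ l k j) = SemidirectProduct.inr (.r j) := by
      unfold upowZ
      rw [map_zpow, fGH_u, ← map_zpow, r_one_zpow, ZMod.intCast_zmod_cast]
    rw [this, ← map_mul, sr_mul_r, zero_add]

lemma fGH_comp_gHG (hl : 3 ≤ l) (hk : 4 ∣ k) :
    (fGH l k hl hk).comp (gHG l k hl hk) = MonoidHom.id _ := by
  refine MonoidHom.ext fun p => ?_
  rcases p with ⟨x, d⟩
  have hmk : (⟨x, d⟩ : H l k hl hk) = SemidirectProduct.inl x * SemidirectProduct.inr d :=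
    mk_eq_inl_mul_inr _ _
  show fGH l k hl hk (gHG l k hl hk ⟨x, d⟩) = ⟨x, d⟩
  calc fGH l k hl hk (gHG l k hl hk ⟨x, d⟩)
      = fGH l k hl hk (gHG l k hl hk (SemidirectProduct.inl x * SemidirectProduct.inr d)) := by
        rw [← hmk]
    _ = SemidirectProduct.inl x * SemidirectProduct.inr d := by
        rw [map_mul, gHG, SemidirectProduct.lift_inl, SemidirectProduct.lift_inr, map_mul,
          fGH_f₁ l k hl hk, fGH_f₂ l k hl hk]
    _ = ⟨x, d⟩ := hmk.symm

/-- the isomorphism between the presented group and the model -/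
def eIso (hl : 3 ≤ l) (hk : 4 ∣ k) : G l k ≃* H l k hl hk :=
  MonoidHom.toMulEquiv (fGH l k hl hk) (gHG l k hl hk)
    (gHG_comp_fGH l k hl hk) (fGH_comp_gHG l k hl hk)

lemma even_iff_dvd (s : ℤ) : Even s ↔ (2 : ℤ) ∣ s :=
  ⟨Even.two_dvd, fun ⟨c, hc⟩ => ⟨c, by omega⟩⟩

lemma L1 (hl : 3 ≤ l) (s : ℤ) :
    (n₁ l : ZMod (2 ^ l)) * ((s : ZMod (2 ^ l))) = (s : ZMod (2 ^ l)) ↔ Even s := by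
  obtain ⟨m, rfl⟩ : ∃ m, l = m + 3 := ⟨l - 3, by omega⟩
  have hn : (n₁ (m + 3) : ZMod (2 ^ (m + 3))) = 2 ^ (m + 2) + 1 := by
    show ((2 ^ (m + 2) + 1 : ℕ) : ZMod (2 ^ (m + 3))) = _
    push_cast; ring
  rw [hn]
  have step1 : (2 ^ (m + 2) + 1 : ZMod (2 ^ (m + 3))) * (s : ZMod (2 ^ (m + 3))) =
      (s : ZMod (2 ^ (m + 3))) ↔
      ((2 ^ (m + 2) * s : ℤ) : ZMod (2 ^ (m + 3))) = 0 := by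
    constructor
    · intro h; push_cast; linear_combination h
    · intro h; push_cast at h; linear_combination h
  rw [step1, ZMod.intCast_zmod_eq_zero_iff_dvd]
  have hpow : ((2 ^ (m + 3) : ℕ) : ℤ) = 2 ^ (m + 2) * 2 := by push_cast; ring
  rw [hpow, mul_dvd_mul_iff_left (a := (2 : ℤ) ^ (m + 2)) (by positivity), ← even_iff_dvd]

lemma L3 (hl : 3 ≤ l) (s : ℤ) :
    (-1 : ZMod (2 ^ l)) * ((s : ZMod (2 ^ l))) = (s : ZMod (2 ^ l)) ↔
      (2 ^ (l - 1) : ℤ) ∣ s := by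
  obtain ⟨m, rfl⟩ : ∃ m, l = m + 3 := ⟨l - 3, by omega⟩
  have step1 : (-1 : ZMod (2 ^ (m + 3))) * (s : ZMod (2 ^ (m + 3))) =
      (s : ZMod (2 ^ (m + 3))) ↔ ((2 * s : ℤ) : ZMod (2 ^ (m + 3))) = 0 := by
    constructor
    · intro h; push_cast; linear_combination -h
    · intro h; push_cast at h; linear_combination -h
  rw [step1, ZMod.intCast_zmod_eq_zero_iff_dvd]
  have hpow : ((2 ^ (m + 3) : ℕ) : ℤ) = 2 * 2 ^ (m + 2) := by push_cast; ring
  rw [hpow, mul_dvd_mul_iff_left (a := (2 : ℤ)) (by norm_num),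
    show (m + 3 - 1) = m + 2 from by omega]

lemma L2 (hl : 3 ≤ l) (s : ℤ) :
    (n₂ l : ZMod (2 ^ l)) * ((s : ZMod (2 ^ l))) = (s : ZMod (2 ^ l)) ↔
      (2 ^ (l - 1) : ℤ) ∣ s := by
  obtain ⟨m, rfl⟩ : ∃ m, l = m + 3 := ⟨l - 3, by omega⟩
  rw [n₂_cast _ (by omega), show (m + 3 - 1) = m + 2 from by omega]
  have step1 : ((2 ^ (m + 2) - 1 : ZMod (2 ^ (m + 3)))) * (s : ZMod (2 ^ (m + 3))) =
      (s : ZMod (2 ^ (m + 3))) ↔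
      (((2 ^ (m + 2) - 2) * s : ℤ) : ZMod (2 ^ (m + 3))) = 0 := by
    constructor
    · intro h; push_cast; linear_combination h
    · intro h; push_cast at h; linear_combination h
  rw [step1, ZMod.intCast_zmod_eq_zero_iff_dvd]
  have hfact : ((2 ^ (m + 2) - 2) * s : ℤ) = 2 * ((2 ^ (m + 1) - 1) * s) := by ring
  have hpow : ((2 ^ (m + 3) : ℕ) : ℤ) = 2 * 2 ^ (m + 2) := by push_cast; ring
  rw [hfact, hpow, mul_dvd_mul_iff_left (a := (2 : ℤ)) (by norm_num)]
  have hodd : ¬ (2 : ℤ) ∣ (2 ^ (m + 1) - 1) := by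
    have h2 : (2 : ℤ) ∣ 2 ^ (m + 1) := dvd_pow_self 2 (Nat.succ_ne_zero m)
    omega
  have hcop : IsCoprime ((2 : ℤ) ^ (m + 2)) (2 ^ (m + 1) - 1) := by
    apply IsCoprime.pow_left
    exact (Int.prime_two.coprime_iff_not_dvd).mpr hodd
  constructor
  · intro h
    exact hcop.dvd_of_dvd_mul_left h
  · intro h
    exact Dvd.dvd.mul_left h _

lemma L4 (hl : 3 ≤ l) :
    (n₂ l : ZMod (2 ^ l)) * (n₁ l : ZMod (2 ^ l)) = -1 := by
  obtain ⟨m, rfl⟩ : ∃ m, l = m + 3 := ⟨l - 3, by omega⟩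
  rw [n₂_cast _ (by omega), show (m + 3 - 1) = m + 2 from by omega]
  have hn : (n₁ (m + 3) : ZMod (2 ^ (m + 3))) = 2 ^ (m + 2) + 1 := by
    show ((2 ^ (m + 2) + 1 : ℕ) : ZMod (2 ^ (m + 3))) = _
    push_cast; ring
  rw [hn]
  have h3 : ((2 ^ (m + 3) : ℕ) : ZMod (2 ^ (m + 3))) = 0 := ZMod.natCast_self _
  push_cast at h3
  calc (2 ^ (m + 2) - 1 : ZMod (2 ^ (m + 3))) * (2 ^ (m + 2) + 1)
      = 2 ^ (m + 3) * (2 ^ (m + 1)) - 1 := by ring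
    _ = -1 := by rw [h3, zero_mul, zero_sub]

lemma L5 (hl : 3 ≤ l) (s : ℤ) (h : (2 ^ (l - 1) : ℤ) ∣ s) : Even s := by
  rw [even_iff_dvd]
  refine dvd_trans ?_ h
  obtain ⟨m, rfl⟩ : ∃ m, l = m + 3 := ⟨l - 3, by omega⟩
  rw [show (m + 3 - 1) = m + 2 from by omega]
  exact dvd_pow_self 2 (Nat.succ_ne_zero _)

def s2fun : DihedralGroup k → Multiplicative (ZMod 2)
  | .r _ => 1
  | .sr _ => ofAdd 1

def s2 : DihedralGroup k →* Multiplicative (ZMod 2) where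
  toFun := s2fun k
  map_one' := by rw [DihedralGroup.one_def]; rfl
  map_mul' d d' := by
    rcases d with i | i <;> rcases d' with j | j <;>
      simp only [r_mul_r, r_mul_sr, sr_mul_r, sr_mul_sr] <;>
      show _ = _ <;> unfold s2fun <;> simp <;> decide

@[simp] lemma s2_r (j : ZMod k) : s2 k (.r j) = 1 := rfl
@[simp] lemma s2_sr (j : ZMod k) : s2 k (.sr j) = ofAdd 1 := rfl

def c2fun (hk : 4 ∣ k) : DihedralGroup k → Multiplicative (ZMod 2 × ZMod 2)
  | .r j => ofAdd (π k hk j, 0)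
  | .sr j => ofAdd (π k hk j, 1)

def c2 (hk : 4 ∣ k) : DihedralGroup k →* Multiplicative (ZMod 2 × ZMod 2) where
  toFun := c2fun k hk
  map_one' := by
    rw [DihedralGroup.one_def]
    show ofAdd (π k hk 0, 0) = 1
    rw [map_zero]
    rfl
  map_mul' d d' := by
    rcases d with i | i <;> rcases d' with j | j <;>
      simp only [r_mul_r, r_mul_sr, sr_mul_r, sr_mul_sr]
    · show ofAdd (π k hk (i + j), (0 : ZMod 2)) =
        ofAdd (π k hk i, (0 : ZMod 2)) * ofAdd (π k hk j, (0 : ZMod 2))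
      rw [← ofAdd_add, Prod.mk_add_mk, map_add, add_zero]
    · show ofAdd (π k hk (j - i), (1 : ZMod 2)) =
        ofAdd (π k hk i, (0 : ZMod 2)) * ofAdd (π k hk j, (1 : ZMod 2))
      rw [← ofAdd_add, Prod.mk_add_mk, map_sub, CharTwo.sub_eq_add, add_comm (π k hk j),
        zero_add]
    · show ofAdd (π k hk (i + j), (1 : ZMod 2)) =
        ofAdd (π k hk i, (1 : ZMod 2)) * ofAdd (π k hk j, (0 : ZMod 2))
      rw [← ofAdd_add, Prod.mk_add_mk, map_add, add_zero]
    · show ofAdd (π k hk (j - i), (0 : ZMod 2)) =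
        ofAdd (π k hk i, (1 : ZMod 2)) * ofAdd (π k hk j, (1 : ZMod 2))
      rw [← ofAdd_add, Prod.mk_add_mk, map_sub, CharTwo.sub_eq_add, add_comm (π k hk j),
        show (1 + 1 : ZMod 2) = 0 from by decide]

@[simp] lemma c2_r (hk : 4 ∣ k) (j : ZMod k) : c2 k hk (.r j) = ofAdd (π k hk j, 0) := rfl
@[simp] lemma c2_sr (hk : 4 ∣ k) (j : ZMod k) : c2 k hk (.sr j) = ofAdd (π k hk j, 1) := rfl

section Main

variable (hl : 3 ≤ l) (hk : 4 ∣ k) (s i : ℤ)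

/-- the image of `a^s * u^(2i)` in the model -/
def Mg : H l k hl hk :=
  ⟨ofAdd ((s : ZMod (2 ^ l))), .r (((2 * i : ℤ) : ZMod k))⟩

lemma pi_c : π k hk (((2 * i : ℤ) : ZMod k)) = 0 := by
  rw [map_intCast, ZMod.intCast_zmod_eq_zero_iff_dvd]
  exact ⟨i, by push_cast; ring⟩

lemma phi_rc (y : Multiplicative (ZMod (2 ^ l))) :
    phi l k hl hk (.r (((2 * i : ℤ) : ZMod k))) y = y := by
  rw [phi_apply, mult_r, pi_c]
  show ofAdd ((1 : ZMod (2 ^ l)) * toAdd y) = y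
  rw [one_mul, ofAdd_toAdd]

lemma inl_ofAdd_one_zpow (z : ℤ) :
    (SemidirectProduct.inl (ofAdd (1 : ZMod (2 ^ l))) : H l k hl hk) ^ z =
      SemidirectProduct.inl (ofAdd ((z : ZMod (2 ^ l)))) := by
  rw [← map_zpow, ← ofAdd_zsmul, zsmul_one]

lemma inr_r_one_zpow (z : ℤ) :
    (SemidirectProduct.inr (.r 1) : H l k hl hk) ^ z =
      SemidirectProduct.inr (.r ((z : ZMod k))) := by
  rw [← map_zpow, r_one_zpow]

lemma e_g : fGH l k hl hk (a l k ^ s * u l k ^ (2 * i)) = Mg l k hl hk s i := by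
  rw [map_mul, map_zpow, map_zpow, fGH_a, fGH_u, inl_ofAdd_one_zpow, inr_r_one_zpow,
    Mg, mk_eq_inl_mul_inr]

lemma ofAdd_inj' {m : ℕ} {x y : ZMod m} (h : ofAdd x = ofAdd y) : x = y := h

lemma comm_r_iff (j : ZMod k) (y : Multiplicative (ZMod (2 ^ l))) :
    (⟨y, .r j⟩ : H l k hl hk) ∈ Subgroup.centralizer {Mg l k hl hk s i} ↔
      c₁ l (π k hk j) * ((s : ZMod (2 ^ l))) = ((s : ZMod (2 ^ l))) := by
  rw [Subgroup.mem_centralizer_singleton_iff, Mg, SemidirectProduct.ext_iff]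
  simp only [mul_left, mul_right]
  rw [phi_rc]
  have hphi : phi l k hl hk (.r j) (ofAdd ((s : ZMod (2 ^ l)))) =
      ofAdd (c₁ l (π k hk j) * ((s : ZMod (2 ^ l)))) := by
    rw [phi_apply, mult_r, toAdd_ofAdd]
  rw [hphi]
  constructor
  · rintro ⟨h1, _⟩
    rw [mul_comm y] at h1
    have h2 := mul_right_cancel h1
    exact ofAdd_inj' h2
  · intro h
    constructor
    · rw [h, mul_comm]
    · rw [r_mul_r, r_mul_r, add_comm]

lemma comm_sr_iff (j : ZMod k) (y : Multiplicative (ZMod (2 ^ l))) :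
    (⟨y, .sr j⟩ : H l k hl hk) ∈ Subgroup.centralizer {Mg l k hl hk s i} ↔
      ((n₂ l : ZMod (2 ^ l)) * c₁ l (π k hk j) * ((s : ZMod (2 ^ l))) = ((s : ZMod (2 ^ l)))
        ∧ (((2 * i : ℤ) : ZMod k)) = -(((2 * i : ℤ) : ZMod k))) := by
  rw [Subgroup.mem_centralizer_singleton_iff, Mg, SemidirectProduct.ext_iff]
  simp only [mul_left, mul_right]
  rw [phi_rc]
  have hphi : phi l k hl hk (.sr j) (ofAdd ((s : ZMod (2 ^ l)))) =
      ofAdd ((n₂ l : ZMod (2 ^ l)) * c₁ l (π k hk j) * ((s : ZMod (2 ^ l)))) := by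
    rw [phi_apply, mult_sr, toAdd_ofAdd]
  rw [hphi, sr_mul_r, r_mul_sr]
  constructor
  · rintro ⟨h1, h2⟩
    constructor
    · rw [mul_comm y] at h1
      exact ofAdd_inj' (mul_right_cancel h1)
    · rw [DihedralGroup.sr.injEq, sub_eq_add_neg] at h2
      exact add_left_cancel h2
  · rintro ⟨h1, h2⟩
    constructor
    · rw [h1, mul_comm]
    · rw [DihedralGroup.sr.injEq, sub_eq_add_neg, ← h2]

lemma Mg_center (h1 : Even s) (h2 : (2 ^ (l - 1) : ℤ) ∣ s)
    (h3 : (((2 * i : ℤ) : ZMod k)) = -(((2 * i : ℤ) : ZMod k))) :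
    Mg l k hl hk s i ∈ Subgroup.center (H l k hl hk) := by
  rw [Subgroup.mem_center_iff]
  intro q
  rcases q with ⟨y, d⟩
  have hn1 : (n₁ l : ZMod (2 ^ l)) * ((s : ZMod (2 ^ l))) = ((s : ZMod (2 ^ l))) :=
    (L1 l hl s).mpr h1
  have hn2 : (n₂ l : ZMod (2 ^ l)) * ((s : ZMod (2 ^ l))) = ((s : ZMod (2 ^ l))) :=
    (L2 l hl s).mpr h2
  have hneg : (-1 : ZMod (2 ^ l)) * ((s : ZMod (2 ^ l))) = ((s : ZMod (2 ^ l))) :=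
    (L3 l hl s).mpr h2
  have hc1 : ∀ b : ZMod 2, c₁ l b * ((s : ZMod (2 ^ l))) = ((s : ZMod (2 ^ l))) := by
    intro b
    rcases zmod2_cases b with rfl | rfl
    · show (1 : ZMod (2^l)) * _ = _
      rw [one_mul]
    · show (n₁ l : ZMod (2^l)) * _ = _
      exact hn1
  cases d with
  | r j =>
    have hmem := (comm_r_iff l k hl hk s i j y).mpr (hc1 _)
    rw [Subgroup.mem_centralizer_singleton_iff] at hmem
    exact hmem
  | sr j =>
    have hcond : (n₂ l : ZMod (2 ^ l)) * c₁ l (π k hk j) * ((s : ZMod (2 ^ l))) =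
        ((s : ZMod (2 ^ l))) := by
      rcases zmod2_cases (π k hk j) with hb | hb
      · rw [hb]
        show (n₂ l : ZMod (2^l)) * 1 * _ = _
        rw [mul_one]
        exact hn2
      · rw [hb]
        show (n₂ l : ZMod (2^l)) * (n₁ l : ZMod (2^l)) * _ = _
        rw [L4 l hl]
        exact hneg
    have hmem := (comm_sr_iff l k hl hk s i j y).mpr ⟨hcond, h3⟩
    rw [Subgroup.mem_centralizer_singleton_iff] at hmem
    exact hmem

end Main

section Main2

variable (hl : 3 ≤ l) (hk : 4 ∣ k) (s i : ℤ)

lemma c₁_zero : c₁ l 0 = 1 := if_pos rfl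
lemma c₁_one : c₁ l 1 = (n₁ l : ZMod (2 ^ l)) := if_neg (by decide)

lemma sr_hdvd (h3l : 3 ≤ l) (j : ZMod k)
    (h1 : (n₂ l : ZMod (2 ^ l)) * c₁ l (π k hk j) * ((s : ZMod (2 ^ l))) =
      ((s : ZMod (2 ^ l)))) :
    (2 ^ (l - 1) : ℤ) ∣ s := by
  rcases zmod2_cases (π k hk j) with hb | hb
  · rw [hb, c₁_zero, mul_one] at h1
    exact (L2 l h3l s).mp h1
  · rw [hb, c₁_one, L4 l h3l] at h1
    exact (L3 l h3l s).mp h1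

lemma cent_even_H (hs : Even s) (hns : Mg l k hl hk s i ∉ Subgroup.center (H l k hl hk)) :
    Subgroup.centralizer {Mg l k hl hk s i} =
      ((s2 k).comp SemidirectProduct.rightHom).ker := by
  ext p
  rcases p with ⟨y, d⟩
  rw [MonoidHom.mem_ker, MonoidHom.comp_apply]
  have hrh : SemidirectProduct.rightHom (⟨y, d⟩ : H l k hl hk) = d := rfl
  rw [hrh]
  cases d with
  | r j =>
    rw [comm_r_iff]
    refine iff_of_true ?_ rfl
    rcases zmod2_cases (π k hk j) with hb | hb
    · rw [hb, c₁_zero, one_mul]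
    · rw [hb, c₁_one]
      exact (L1 l hl s).mpr hs
  | sr j =>
    rw [comm_sr_iff]
    refine iff_of_false ?_ ?_
    · rintro ⟨h1, h2⟩
      exact hns (Mg_center l k hl hk s i hs (sr_hdvd l k hk s hl j h1) h2)
    · rw [s2_sr]
      intro hcon
      exact absurd (ofAdd_eq_one.mp hcon) (by decide)

lemma cent_odd_H (hs : Odd s) :
    Subgroup.centralizer {Mg l k hl hk s i} =
      ((c2 k hk).comp SemidirectProduct.rightHom).ker := by
  have hnev : ¬ Even s := Int.not_even_iff_odd.mpr hs
  ext p
  rcases p with ⟨y, d⟩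
  rw [MonoidHom.mem_ker, MonoidHom.comp_apply]
  have hrh : SemidirectProduct.rightHom (⟨y, d⟩ : H l k hl hk) = d := rfl
  rw [hrh]
  cases d with
  | r j =>
    rw [comm_r_iff, c2_r, ofAdd_eq_one, Prod.mk_eq_zero]
    constructor
    · intro h
      refine ⟨?_, rfl⟩
      rcases zmod2_cases (π k hk j) with hb | hb
      · exact hb
      · rw [hb, c₁_one] at h
        exact absurd ((L1 l hl s).mp h) hnev
    · rintro ⟨hb, -⟩
      rw [hb, c₁_zero, one_mul]
  | sr j =>
    rw [comm_sr_iff, c2_sr, ofAdd_eq_one, Prod.mk_eq_zero]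
    refine iff_of_false ?_ ?_
    · rintro ⟨h1, -⟩
      exact hnev (L5 l hl s (sr_hdvd l k hk s hl j h1))
    · rintro ⟨-, hcon⟩
      exact absurd hcon (by decide)

lemma closure_AU :
    Subgroup.closure {(SemidirectProduct.inl (ofAdd 1) : H l k hl hk),
        SemidirectProduct.inr (.r 1)} =
      ((s2 k).comp SemidirectProduct.rightHom).ker := by
  apply le_antisymm
  · rw [Subgroup.closure_le]
    intro x hx
    simp only [Set.mem_insert_iff, Set.mem_singleton_iff] at hx
    rcases hx with rfl | rfl
    · rw [SetLike.mem_coe, MonoidHom.mem_ker, MonoidHom.comp_apply,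
        SemidirectProduct.rightHom_inl, map_one]
    · rw [SetLike.mem_coe, MonoidHom.mem_ker, MonoidHom.comp_apply,
        SemidirectProduct.rightHom_inr]
      rfl
  · intro p hp
    rcases p with ⟨y, d⟩
    rw [MonoidHom.mem_ker, MonoidHom.comp_apply] at hp
    have hrh : SemidirectProduct.rightHom (⟨y, d⟩ : H l k hl hk) = d := rfl
    rw [hrh] at hp
    cases d with
    | r j =>
      have hy : (SemidirectProduct.inl y : H l k hl hk) =
          (SemidirectProduct.inl (ofAdd 1) : H l k hl hk) ^ ((ZMod.cast (toAdd y) : ℤ)) := by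
        rw [inl_ofAdd_one_zpow, ZMod.intCast_zmod_cast, ofAdd_toAdd]
      have hr : (SemidirectProduct.inr (.r j) : H l k hl hk) =
          (SemidirectProduct.inr (.r 1) : H l k hl hk) ^ ((ZMod.cast j : ℤ)) := by
        rw [inr_r_one_zpow, ZMod.intCast_zmod_cast]
      have hmk : (⟨y, .r j⟩ : H l k hl hk) =
          SemidirectProduct.inl y * SemidirectProduct.inr (.r j) := mk_eq_inl_mul_inr _ _
      rw [hmk, hy, hr]
      have hA : (SemidirectProduct.inl (ofAdd 1) : H l k hl hk) ∈
          ({(SemidirectProduct.inl (ofAdd 1) : H l k hl hk),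
            SemidirectProduct.inr (.r 1)} : Set (H l k hl hk)) := Set.mem_insert _ _
      have hU : (SemidirectProduct.inr (.r 1) : H l k hl hk) ∈
          ({(SemidirectProduct.inl (ofAdd 1) : H l k hl hk),
            SemidirectProduct.inr (.r 1)} : Set (H l k hl hk)) :=
        Set.mem_insert_of_mem _ rfl
      exact mul_mem
        (zpow_mem (Subgroup.subset_closure hA) _)
        (zpow_mem (Subgroup.subset_closure hU) _)
    | sr j =>
      exfalso
      rw [s2_sr] at hp
      exact absurd (ofAdd_eq_one.mp hp) (by decide)

lemma closure_AU2 :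
    Subgroup.closure {(SemidirectProduct.inl (ofAdd 1) : H l k hl hk),
        (SemidirectProduct.inr (.r 1)) ^ (2 : ℕ)} =
      ((c2 k hk).comp SemidirectProduct.rightHom).ker := by
  apply le_antisymm
  · rw [Subgroup.closure_le]
    intro x hx
    simp only [Set.mem_insert_iff, Set.mem_singleton_iff] at hx
    rcases hx with rfl | rfl
    · rw [SetLike.mem_coe, MonoidHom.mem_ker, MonoidHom.comp_apply,
        SemidirectProduct.rightHom_inl, map_one]
    · rw [SetLike.mem_coe, MonoidHom.mem_ker, MonoidHom.comp_apply, map_pow,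
        SemidirectProduct.rightHom_inr]
      have : (DihedralGroup.r 1 : DihedralGroup k) ^ (2:ℕ) = .r 2 := by
        rw [pow_two, r_mul_r]
        norm_num
      rw [this, c2_r, ofAdd_eq_one, Prod.mk_eq_zero]
      refine ⟨?_, rfl⟩
      have h2 : ((2 : ZMod k)) = (((2:ℤ) : ZMod k)) := by push_cast; rfl
      rw [h2, map_intCast]
      decide
  · intro p hp
    rcases p with ⟨y, d⟩
    rw [MonoidHom.mem_ker, MonoidHom.comp_apply] at hp
    have hrh : SemidirectProduct.rightHom (⟨y, d⟩ : H l k hl hk) = d := rfl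
    rw [hrh] at hp
    cases d with
    | r j =>
      rw [c2_r, ofAdd_eq_one, Prod.mk_eq_zero] at hp
      obtain ⟨hpj, -⟩ := hp
      have hπ : π k hk j = (((ZMod.cast j : ℤ)) : ZMod 2) := by
        rw [π, ZMod.castHom_apply, ZMod.intCast_cast]
      rw [hπ, ZMod.intCast_zmod_eq_zero_iff_dvd] at hpj
      obtain ⟨t, ht⟩ := hpj
      have hy : (SemidirectProduct.inl y : H l k hl hk) =
          (SemidirectProduct.inl (ofAdd 1) : H l k hl hk) ^ ((ZMod.cast (toAdd y) : ℤ)) := by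
        rw [inl_ofAdd_one_zpow, ZMod.intCast_zmod_cast, ofAdd_toAdd]
      have hr : (SemidirectProduct.inr (.r j) : H l k hl hk) =
          ((SemidirectProduct.inr (.r 1) : H l k hl hk) ^ (2:ℕ)) ^ t := by
        rw [← zpow_natCast ((SemidirectProduct.inr (.r 1) : H l k hl hk)) 2, ← zpow_mul,
          inr_r_one_zpow]
        congr 2
        rw [← ht, ZMod.intCast_zmod_cast]
      have hmk : (⟨y, .r j⟩ : H l k hl hk) =
          SemidirectProduct.inl y * SemidirectProduct.inr (.r j) := mk_eq_inl_mul_inr _ _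
      rw [hmk, hy, hr]
      have hA : (SemidirectProduct.inl (ofAdd 1) : H l k hl hk) ∈
          ({(SemidirectProduct.inl (ofAdd 1) : H l k hl hk),
            (SemidirectProduct.inr (.r 1)) ^ (2 : ℕ)} : Set (H l k hl hk)) := Set.mem_insert _ _
      have hU : ((SemidirectProduct.inr (.r 1) : H l k hl hk)) ^ (2 : ℕ) ∈
          ({(SemidirectProduct.inl (ofAdd 1) : H l k hl hk),
            (SemidirectProduct.inr (.r 1)) ^ (2 : ℕ)} : Set (H l k hl hk)) :=
        Set.mem_insert_of_mem _ rfl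
      exact mul_mem
        (zpow_mem (Subgroup.subset_closure hA) _)
        (zpow_mem (Subgroup.subset_closure hU) _)
    | sr j =>
      exfalso
      rw [c2_sr, ofAdd_eq_one, Prod.mk_eq_zero] at hp
      exact absurd hp.2 (by decide)

end Main2

section Transfer

variable {G' H' : Type*} [Group G'] [Group H']

lemma map_centralizer_eq (e : G' ≃* H') (g : G') :
    Subgroup.map e.toMonoidHom (Subgroup.centralizer {g}) = Subgroup.centralizer {e g} := by
  ext y
  obtain ⟨x, rfl⟩ := e.surjective y
  simp only [Subgroup.mem_map]
  constructor
  · rintro ⟨x', hx', hxe⟩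
    have hxe' : e x' = e x := hxe
    rw [Subgroup.mem_centralizer_singleton_iff, ← hxe', ← map_mul, ← map_mul,
      (Subgroup.mem_centralizer_singleton_iff.mp hx' : x' * g = g * x')]
  · intro hy
    refine ⟨x, ?_, rfl⟩
    rw [Subgroup.mem_centralizer_singleton_iff] at hy ⊢
    apply e.injective
    rw [map_mul, map_mul]
    exact hy

lemma mem_center_equiv (e : G' ≃* H') (x : G') :
    x ∈ Subgroup.center G' ↔ e x ∈ Subgroup.center H' := by
  simp only [Subgroup.mem_center_iff]
  constructor
  · intro hx y
    obtain ⟨z, rfl⟩ := e.surjective y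
    rw [← map_mul, ← map_mul, hx]
  · intro hx z
    apply e.injective
    rw [map_mul, map_mul]
    exact hx (e z)

end Transfer

lemma eIso_apply (hl : 3 ≤ l) (hk : 4 ∣ k) (x : G l k) :
    eIso l k hl hk x = fGH l k hl hk x := rfl

end ZkDlG

open ZkDl

theorem centralizer_even (l k : ℕ) (hl : 3 ≤ l) (hk : 4 ∣ k) (s i : ℤ)
    (h : a l k ^ s * u l k ^ (2 * i) ∉ Subgroup.center (G l k)) :
    (Even s → Subgroup.centralizer {a l k ^ s * u l k ^ (2 * i)} =
      Subgroup.closure {a l k, u l k}) ∧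
    (Odd s → Subgroup.centralizer {a l k ^ s * u l k ^ (2 * i)} =
      Subgroup.closure {a l k, u l k ^ 2}) ∧
    (Subgroup.centralizer {a l k ^ s * u l k ^ (2 * i)}).Normal := by
  set e := ZkDlG.eIso l k hl hk with he
  have heg : e (a l k ^ s * u l k ^ (2 * i)) = ZkDlG.Mg l k hl hk s i :=
    ZkDlG.e_g l k hl hk s i
  have hns : ZkDlG.Mg l k hl hk s i ∉ Subgroup.center (ZkDlModel.H l k hl hk) := by
    intro hc
    exact h ((ZkDlG.mem_center_equiv e _).mpr (by rw [heg]; exact hc))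
  have hinj : Function.Injective (e.toMonoidHom : G l k →* ZkDlModel.H l k hl hk) := e.injective
  -- even case
  have heven : Even s → Subgroup.centralizer {a l k ^ s * u l k ^ (2 * i)} =
      Subgroup.closure {a l k, u l k} := by
    intro hs
    have h1 : Subgroup.map e.toMonoidHom
        (Subgroup.centralizer {a l k ^ s * u l k ^ (2 * i)}) =
        ((ZkDlG.s2 k).comp SemidirectProduct.rightHom).ker := by
      rw [ZkDlG.map_centralizer_eq, heg, ZkDlG.cent_even_H l k hl hk s i hs hns]
    have h2 : Subgroup.map e.toMonoidHom (Subgroup.closure {a l k, u l k}) =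
        ((ZkDlG.s2 k).comp SemidirectProduct.rightHom).ker := by
      rw [MonoidHom.map_closure, Set.image_pair]
      have hea : e.toMonoidHom (a l k) = SemidirectProduct.inl (Multiplicative.ofAdd 1) :=
        ZkDlG.fGH_a l k hl hk
      have heu : e.toMonoidHom (u l k) = SemidirectProduct.inr (.r 1) :=
        ZkDlG.fGH_u l k hl hk
      rw [hea, heu, ZkDlG.closure_AU l k hl hk]
    exact Subgroup.map_injective hinj (h1.trans h2.symm)
  have hodd : Odd s → Subgroup.centralizer {a l k ^ s * u l k ^ (2 * i)} =
      Subgroup.closure {a l k, u l k ^ 2} := by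
    intro hs
    have h1 : Subgroup.map e.toMonoidHom
        (Subgroup.centralizer {a l k ^ s * u l k ^ (2 * i)}) =
        ((ZkDlG.c2 k hk).comp SemidirectProduct.rightHom).ker := by
      rw [ZkDlG.map_centralizer_eq, heg, ZkDlG.cent_odd_H l k hl hk s i hs]
    have h2 : Subgroup.map e.toMonoidHom (Subgroup.closure {a l k, u l k ^ 2}) =
        ((ZkDlG.c2 k hk).comp SemidirectProduct.rightHom).ker := by
      rw [MonoidHom.map_closure, Set.image_pair]
      have hea : e.toMonoidHom (a l k) = SemidirectProduct.inl (Multiplicative.ofAdd 1) :=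
        ZkDlG.fGH_a l k hl hk
      have heu : e.toMonoidHom (u l k ^ 2) = (SemidirectProduct.inr (.r 1)) ^ (2 : ℕ) := by
        rw [map_pow]
        congr 1
        exact ZkDlG.fGH_u l k hl hk
      rw [hea, heu, ZkDlG.closure_AU2 l k hl hk]
    exact Subgroup.map_injective hinj (h1.trans h2.symm)
  refine ⟨heven, hodd, ?_⟩
  have hker : ∃ (T : Type) (_ : Group T) (w : ZkDlModel.H l k hl hk →* T),
      Subgroup.map e.toMonoidHom (Subgroup.centralizer {a l k ^ s * u l k ^ (2 * i)}) =
        w.ker := by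
    rcases Int.even_or_odd s with hs | hs
    · exact ⟨_, _, (ZkDlG.s2 k).comp SemidirectProduct.rightHom, by
        rw [ZkDlG.map_centralizer_eq, heg, ZkDlG.cent_even_H l k hl hk s i hs hns]⟩
    · exact ⟨_, _, (ZkDlG.c2 k hk).comp SemidirectProduct.rightHom, by
        rw [ZkDlG.map_centralizer_eq, heg, ZkDlG.cent_odd_H l k hl hk s i hs]⟩
  obtain ⟨T, _, w, hw⟩ := hker
  have hcomap := Subgroup.comap_map_eq_self_of_injective hinj
    (Subgroup.centralizer {a l k ^ s * u l k ^ (2 * i)})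
  rw [hw] at hcomap
  rw [← hcomap]
  exact Subgroup.Normal.comap (MonoidHom.normal_ker w) _
end
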